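/- arXiv:2004.02180 — 5 statements merged into one kernel-verified Lean document; each statement's English description precedes it below -/
import Mathlib

section
/- Let m ≤ n and let {A,B} be an (m,p,n)-GMP with GSVD as in the context, with generalized singular values (αᵢ, βᵢ). Then for every 1 ≤ i ≤ m, max_{Ψ ∈ 𝕌_m} Re tr(Aᴴ Ψᴴ 𝒬_i Ψ A (AᴴA + BᴴB)^{-1}) = α₁² + α₂² + ⋯ + αᵢ². -/
open Matrix BigOperators
open scoped ComplexOrder

lemma aux_bound {m : ℕ} (i' : Fin m) (a : Fin m → ℝ)
    (hmono : Antitone a) (s : Fin m → Fin m → ℝ) (hs0 : ∀ j k, 0 ≤ s j k)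
    (hrow : ∀ k, ∑ j, s j k = 1) (hcol : ∀ j, ∑ k, s j k = 1) :
    ∑ j, (∑ k ∈ Finset.Iic i', s j k) * a j ≤ ∑ j ∈ Finset.Iic i', a j := by
  set c : Fin m → ℝ := fun j => ∑ k ∈ Finset.Iic i', s j k with hc
  have hc0 : ∀ j, 0 ≤ c j := fun j => Finset.sum_nonneg fun k _ => hs0 j k
  have hc1 : ∀ j, c j ≤ 1 := by
    intro j
    rw [← hcol j]
    exact Finset.sum_le_sum_of_subset_of_nonneg (Finset.subset_univ _) (fun k _ _ => hs0 j k)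
  have hcsum : ∑ j, c j = (Finset.Iic i').card := by
    rw [Finset.sum_comm]
    simp [hrow]
  have hsplit : ∑ j, c j * a j
      = ∑ j ∈ Finset.Iic i', c j * a j + ∑ j ∈ (Finset.Iic i')ᶜ, c j * a j :=
    (Finset.sum_add_sum_compl _ _).symm
  have hsplit' : ∑ j, c j
      = ∑ j ∈ Finset.Iic i', c j + ∑ j ∈ (Finset.Iic i')ᶜ, c j :=
    (Finset.sum_add_sum_compl _ _).symm
  have h1 : ∑ j ∈ (Finset.Iic i')ᶜ, c j * a j ≤ (∑ j ∈ (Finset.Iic i')ᶜ, c j) * a i' := by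
    rw [Finset.sum_mul]
    refine Finset.sum_le_sum fun j hj => ?_
    have : i' ≤ j := le_of_lt (by simpa using (Finset.mem_compl.mp hj))
    exact mul_le_mul_of_nonneg_left (hmono this) (hc0 j)
  have h2 : (∑ j ∈ Finset.Iic i', (1 - c j)) * a i' ≤ ∑ j ∈ Finset.Iic i', (1 - c j) * a j := by
    rw [Finset.sum_mul]
    refine Finset.sum_le_sum fun j hj => ?_
    exact mul_le_mul_of_nonneg_left (hmono (Finset.mem_Iic.mp hj)) (by linarith [hc1 j])
  have heq : ∑ j ∈ (Finset.Iic i')ᶜ, c j = ∑ j ∈ Finset.Iic i', (1 - c j) := by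
    have := hcsum
    rw [hsplit'] at this
    rw [Finset.sum_sub_distrib]
    simp at this ⊢
    linarith
  have hmain : ∑ j ∈ (Finset.Iic i')ᶜ, c j * a j ≤ ∑ j ∈ Finset.Iic i', (1 - c j) * a j := by
    calc ∑ j ∈ (Finset.Iic i')ᶜ, c j * a j ≤ (∑ j ∈ (Finset.Iic i')ᶜ, c j) * a i' := h1
      _ = (∑ j ∈ Finset.Iic i', (1 - c j)) * a i' := by rw [heq]
      _ ≤ _ := h2
  have hfin : ∑ j ∈ Finset.Iic i', (1 - c j) * a j
      = ∑ j ∈ Finset.Iic i', a j - ∑ j ∈ Finset.Iic i', c j * a j := by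
    rw [← Finset.sum_sub_distrib]
    congr 1; ext j; ring
  rw [hsplit]
  linarith [hmain, hfin.le]

theorem stmt10
    {m p n : ℕ} (hmn : m ≤ n)
    (A : Matrix (Fin m) (Fin n) ℂ) (B : Matrix (Fin p) (Fin n) ℂ)
    (hrank : (Matrix.fromRows A B).rank = n)
    (U : Matrix (Fin m) (Fin m) ℂ) (hU : U ∈ Matrix.unitaryGroup (Fin m) ℂ)
    (R : Matrix (Fin n) (Fin n) ℂ) (hR : IsUnit R.det)
    (α : Fin n → ℝ)
    (hα0 : ∀ k, 0 ≤ α k) (hα1 : ∀ k, α k ≤ 1) (hmono : Antitone α)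
    (hzero : ∀ k : Fin n, m ≤ (k : ℕ) → α k = 0)
    (hA : A = U * (Matrix.of fun (k : Fin m) (l : Fin n) =>
        if (k : ℕ) = (l : ℕ) then Complex.ofReal (α l) else 0) * R)
    (hBB : Bᴴ * B = Rᴴ * Matrix.diagonal (fun l => Complex.ofReal (1 - α l ^ 2)) * R)
    (i : Fin n) (him : (i : ℕ) < m) :
(⨆ Φ : Matrix.unitaryGroup (Fin m) ℂ,
      (Matrix.trace (Aᴴ * (Φ : Matrix (Fin m) (Fin m) ℂ)ᴴ *
        Matrix.diagonal (fun k : Fin m => if (k : ℕ) ≤ (i : ℕ) then (1 : ℂ) else 0) *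
        (Φ : Matrix (Fin m) (Fin m) ℂ) * A * (Aᴴ * A + Bᴴ * B)⁻¹)).re) =
      ∑ k ∈ Finset.Iic i, α k ^ 2 := by
  have hUU : Uᴴ * U = 1 := by
    have := hU.1
    rwa [star_eq_conjTranspose] at this
  set Sg : Matrix (Fin m) (Fin n) ℂ := Matrix.of fun (k : Fin m) (l : Fin n) =>
      if (k : ℕ) = (l : ℕ) then Complex.ofReal (α l) else 0 with hSg
  set Dm : Matrix (Fin m) (Fin m) ℂ :=
      Matrix.diagonal (fun k : Fin m => (Complex.ofReal (α (Fin.castLE hmn k)))^2) with hDm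
  set Q : Matrix (Fin m) (Fin m) ℂ :=
      Matrix.diagonal (fun k : Fin m => if (k : ℕ) ≤ (i : ℕ) then (1 : ℂ) else 0) with hQ
  set i' : Fin m := ⟨(i : ℕ), him⟩ with hi'
  -- diagonal computations
  have h1 : Sg * Sgᴴ = Dm := by
    ext k k'
    simp only [hSg, hDm, Matrix.mul_apply, Matrix.conjTranspose_apply, Matrix.of_apply,
      Matrix.diagonal_apply]
    rw [Finset.sum_eq_single (Fin.castLE hmn k)]
    · simp only [Fin.coe_castLE]
      by_cases h : k' = k
      · subst h; simp [sq]
      · have : ¬ ((k':ℕ) = (k:ℕ)) := fun hh => h (Fin.ext hh)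
        simp [this, fun hh => h (Fin.ext hh : k' = k), Fin.ext_iff, Ne.symm]
    · intro l _ hl
      have : ¬ ((k:ℕ) = (l:ℕ)) := by
        intro hh
        exact hl (by ext; simp [← hh])
      simp [this]
    · simp
  have h2 : Sgᴴ * Sg = Matrix.diagonal (fun l : Fin n => (Complex.ofReal (α l))^2) := by
    ext l l'
    simp only [hSg, Matrix.mul_apply, Matrix.conjTranspose_apply, Matrix.of_apply,
      Matrix.diagonal_apply]
    by_cases hl : (l : ℕ) < m
    · rw [Finset.sum_eq_single (⟨(l:ℕ), hl⟩ : Fin m)]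
      · by_cases h : l' = l
        · subst h; simp [sq]
        · have h1 : ¬ ((l:ℕ) = (l':ℕ)) := fun hh => h (Fin.ext hh.symm)
          have h2' : ¬ (l = l') := fun hh => h hh.symm
          simp [h1, h2']
      · intro k _ hk
        have : ¬ ((k:ℕ) = (l:ℕ)) := fun hh => hk (by ext; simp [hh])
        simp [this]
      · simp
    · have hα : α l = 0 := hzero l (le_of_not_gt hl)
      have : ∀ k : Fin m, ¬ ((k:ℕ) = (l:ℕ)) := by
        intro k hh; exact hl (hh ▸ k.isLt)
      simp [this, hα]
  -- M = RᴴR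
  have hM : Aᴴ * A + Bᴴ * B = Rᴴ * R := by
    have hAA : Aᴴ * A = Rᴴ * Matrix.diagonal (fun l : Fin n => (Complex.ofReal (α l))^2) * R := by
      rw [hA]
      rw [conjTranspose_mul, conjTranspose_mul]
      calc Rᴴ * (Sgᴴ * Uᴴ) * (U * Sg * R) = Rᴴ * (Sgᴴ * ((Uᴴ * U) * (Sg * R))) := by
            simp only [Matrix.mul_assoc]
        _ = Rᴴ * (Sgᴴ * Sg) * R := by rw [hUU]; simp only [Matrix.one_mul, Matrix.mul_assoc]
        _ = _ := by rw [h2]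
    rw [hAA, hBB]
    rw [Matrix.mul_assoc, Matrix.mul_assoc, ← Matrix.mul_add, ← Matrix.add_mul]
    rw [Matrix.diagonal_add]
    have : (Matrix.diagonal fun l : Fin n =>
        (Complex.ofReal (α l))^2 + Complex.ofReal (1 - α l ^ 2)) = 1 := by
      rw [← Matrix.diagonal_one]
      congr 1
      funext l
      push_cast
      ring
    rw [this, Matrix.one_mul]
  have hRdet : IsUnit Rᴴ.det := by
    rw [Matrix.det_conjTranspose]
    exact hR.star
  have hAMA : A * (Aᴴ * A + Bᴴ * B)⁻¹ * Aᴴ = U * Dm * Uᴴ := by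
    rw [hM, Matrix.mul_inv_rev, hA, conjTranspose_mul, conjTranspose_mul]
    calc U * Sg * R * (R⁻¹ * Rᴴ⁻¹) * (Rᴴ * (Sgᴴ * Uᴴ))
        = U * (Sg * ((R * R⁻¹) * ((Rᴴ⁻¹ * Rᴴ) * Sgᴴ))) * Uᴴ := by
          simp only [Matrix.mul_assoc]
      _ = U * (Sg * Sgᴴ) * Uᴴ := by
          rw [Matrix.mul_nonsing_inv R hR, Matrix.nonsing_inv_mul Rᴴ hRdet]
          simp only [Matrix.one_mul, Matrix.mul_assoc]
      _ = U * Dm * Uᴴ := by rw [h1]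
  -- trace identity
  have key : ∀ Φ : Matrix (Fin m) (Fin m) ℂ,
      Matrix.trace (Aᴴ * Φᴴ * Q * Φ * A * (Aᴴ * A + Bᴴ * B)⁻¹)
        = Matrix.trace ((Φ * U)ᴴ * Q * (Φ * U) * Dm) := by
    intro Φ
    have e1 : Aᴴ * Φᴴ * Q * Φ * A * (Aᴴ * A + Bᴴ * B)⁻¹
        = Aᴴ * (Φᴴ * Q * Φ * (A * (Aᴴ * A + Bᴴ * B)⁻¹)) := by
      simp only [Matrix.mul_assoc]
    rw [e1, Matrix.trace_mul_comm]
    have e2 : Φᴴ * Q * Φ * (A * (Aᴴ * A + Bᴴ * B)⁻¹) * Aᴴ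
        = Φᴴ * Q * Φ * (A * (Aᴴ * A + Bᴴ * B)⁻¹ * Aᴴ) := by
      simp only [Matrix.mul_assoc]
    rw [e2, hAMA]
    have e3 : Φᴴ * Q * Φ * (U * Dm * Uᴴ) = (Φᴴ * Q * Φ * (U * Dm)) * Uᴴ := by
      simp only [Matrix.mul_assoc]
    rw [e3, Matrix.trace_mul_comm]
    rw [conjTranspose_mul]
    simp only [Matrix.mul_assoc]
  -- expansion of the trace for unitary Ψ
  have expand : ∀ Ψ : Matrix (Fin m) (Fin m) ℂ,
      (Matrix.trace (Ψᴴ * Q * Ψ * Dm)).re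
        = ∑ j, (∑ k ∈ Finset.Iic i', Complex.normSq (Ψ k j)) * (α (Fin.castLE hmn j))^2 := by
    intro Ψ
    have : Matrix.trace (Ψᴴ * Q * Ψ * Dm)
        = ((∑ j, (∑ k ∈ Finset.Iic i', Complex.normSq (Ψ k j)) * (α (Fin.castLE hmn j))^2 : ℝ) : ℂ) := by
      rw [Matrix.trace]
      push_cast
      refine Finset.sum_congr rfl fun j _ => ?_
      rw [Matrix.diag_apply, hDm, Matrix.mul_diagonal, Matrix.mul_apply]
      congr 1
      have hterm : ∀ k : Fin m, (Ψᴴ * Q) j k * Ψ k j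
          = if k ∈ Finset.Iic i' then ((Complex.normSq (Ψ k j) : ℝ) : ℂ) else 0 := by
        intro k
        rw [hQ, Matrix.mul_diagonal, Matrix.conjTranspose_apply]
        have hmem : k ∈ Finset.Iic i' ↔ (k : ℕ) ≤ (i : ℕ) := by
          rw [Finset.mem_Iic, Fin.le_def]
        by_cases hk : (k : ℕ) ≤ (i : ℕ)
        · rw [if_pos hk, if_pos (hmem.mpr hk)]
          simp [Complex.star_def]
          rw [mul_comm, Complex.mul_conj]
        · rw [if_neg hk, if_neg (fun h => hk (hmem.mp h))]
          ring
      rw [Finset.sum_congr rfl (fun k _ => hterm k), Finset.sum_ite_mem, Finset.univ_inter]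
    rw [this, Complex.ofReal_re]
  -- antitone squares
  have ha_mono : Antitone (fun j : Fin m => (α (Fin.castLE hmn j))^2) := by
    intro x y hxy
    have h1 : α (Fin.castLE hmn y) ≤ α (Fin.castLE hmn x) := hmono (by
      rw [Fin.le_def]; exact Fin.le_def.mp hxy)
    exact pow_le_pow_left₀ (hα0 _) h1 2
  -- bound for unitary
  have hbound : ∀ Ψ ∈ Matrix.unitaryGroup (Fin m) ℂ,
      (Matrix.trace (Ψᴴ * Q * Ψ * Dm)).re ≤ ∑ j ∈ Finset.Iic i', (α (Fin.castLE hmn j))^2 := by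
    intro Ψ hΨ
    have hΨ1 : Ψᴴ * Ψ = 1 := by
      have := hΨ.1; rwa [star_eq_conjTranspose] at this
    have hΨ2 : Ψ * Ψᴴ = 1 := by
      have := hΨ.2; rwa [star_eq_conjTranspose] at this
    rw [expand]
    refine aux_bound i' _ ha_mono (fun j k => Complex.normSq (Ψ k j))
      (fun j k => Complex.normSq_nonneg _) ?_ ?_
    · intro k
      have h := congrFun (congrFun hΨ2 k) k
      rw [Matrix.mul_apply] at h
      simp only [Matrix.conjTranspose_apply, Matrix.one_apply_eq, Complex.star_def,
        Complex.mul_conj] at h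
      exact_mod_cast h
    · intro j
      have h := congrFun (congrFun hΨ1 j) j
      rw [Matrix.mul_apply] at h
      simp only [Matrix.conjTranspose_apply, Matrix.one_apply_eq, Complex.star_def] at h
      have h' : ∀ k : Fin m, (starRingEnd ℂ) (Ψ k j) * Ψ k j = ((Complex.normSq (Ψ k j) : ℝ) : ℂ) := by
        intro k
        rw [mul_comm, Complex.mul_conj]
      rw [Finset.sum_congr rfl (fun k _ => h' k)] at h
      exact_mod_cast h
  -- attainment at Ψ = 1
  have hatt : (Matrix.trace ((1 : Matrix (Fin m) (Fin m) ℂ)ᴴ * Q * 1 * Dm)).re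
      = ∑ j ∈ Finset.Iic i', (α (Fin.castLE hmn j))^2 := by
    rw [expand]
    have h1' : ∀ j : Fin m, ∑ k ∈ Finset.Iic i', Complex.normSq ((1 : Matrix (Fin m) (Fin m) ℂ) k j)
        = if j ∈ Finset.Iic i' then 1 else 0 := by
      intro j
      have : ∀ k : Fin m, Complex.normSq ((1 : Matrix (Fin m) (Fin m) ℂ) k j)
          = if k = j then 1 else 0 := by
        intro k
        by_cases h : k = j
        · subst h; simp [Matrix.one_apply_eq]
        · simp [Matrix.one_apply_ne h, h]
      rw [Finset.sum_congr rfl (fun k _ => this k), Finset.sum_ite_eq']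
    rw [Finset.sum_congr rfl (fun j _ => by rw [h1' j])]
    simp only [ite_mul, one_mul, zero_mul, Finset.sum_ite_mem, Finset.univ_inter]
  -- RHS conversion
  have hset : Finset.map (Fin.castLEEmb hmn) (Finset.Iic i') = Finset.Iic i := by
    ext k
    simp only [Finset.mem_map, Finset.mem_Iic, Fin.castLEEmb_apply]
    constructor
    · rintro ⟨j, hj, rfl⟩
      rw [Fin.le_def]
      exact Fin.le_def.mp hj
    · intro hk
      have hkm : (k : ℕ) < m := lt_of_le_of_lt (Fin.le_def.mp hk) him
      exact ⟨⟨(k : ℕ), hkm⟩, Fin.le_def.mpr (Fin.le_def.mp hk), by ext; simp⟩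
  have hRHS : ∑ j ∈ Finset.Iic i', (α (Fin.castLE hmn j))^2 = ∑ k ∈ Finset.Iic i, α k ^ 2 := by
    rw [← hset, Finset.sum_map]
    rfl
  -- assemble
  have hU' : (star U) * U = 1 := hU.1
  have hmemU : star U ∈ Matrix.unitaryGroup (Fin m) ℂ := Unitary.star_mem hU
  have hbdd : BddAbove (Set.range fun Φ : Matrix.unitaryGroup (Fin m) ℂ =>
      (Matrix.trace (Aᴴ * (Φ : Matrix (Fin m) (Fin m) ℂ)ᴴ * Q *
        (Φ : Matrix (Fin m) (Fin m) ℂ) * A * (Aᴴ * A + Bᴴ * B)⁻¹)).re) := by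
    refine ⟨∑ k ∈ Finset.Iic i, α k ^ 2, ?_⟩
    rintro x ⟨Φ, rfl⟩
    dsimp only
    rw [key]
    rw [← hRHS]
    exact hbound _ (mul_mem Φ.2 hU)
  apply le_antisymm
  · apply ciSup_le
    intro Φ
    rw [key, ← hRHS]
    exact hbound _ (mul_mem Φ.2 hU)
  · refine le_ciSup_of_le hbdd ⟨star U, hmemU⟩ ?_
    rw [key]
    rw [show (star U : Matrix (Fin m) (Fin m) ℂ) * U = 1 from hU']
    rw [hatt, hRHS]
end

section
/- Let p ≤ n and let {A,B} be an (m,p,n)-GMP with GSVD as in the context, with generalized singular values (αᵢ, βᵢ). Then for every n−p+1 ≤ i ≤ n, max_{Ψ ∈ 𝕌_p} Re tr(Bᴴ Ψᴴ 𝒫_i Ψ B (AᴴA + BᴴB)^{-1}) = βᵢ² + β_{i+1}² + ⋯ + βₙ². -/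
open Matrix BigOperators
open scoped ComplexOrder

-- Auxiliary: abstract rearrangement bound
lemma stmt11_bnd {ι : Type*} [Fintype ι] [DecidableEq ι] (s d : ι → ℝ) (T : Finset ι) (c : ℝ)
    (hs0 : ∀ k, 0 ≤ s k) (hs1 : ∀ k, s k ≤ 1)
    (hsum : ∑ k, s k = T.card)
    (hd1 : ∀ k ∈ T, c ≤ d k) (hd2 : ∀ k ∉ T, d k ≤ c) :
    ∑ k, s k * d k ≤ ∑ k ∈ T, d k := by
  have hsplit : ∑ k, s k * d k = ∑ k ∈ T, s k * d k + ∑ k ∈ Tᶜ, s k * d k :=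
    (Finset.sum_add_sum_compl T _).symm
  have h1 : ∑ k ∈ Tᶜ, s k * d k ≤ c * ∑ k ∈ Tᶜ, s k := by
    rw [Finset.mul_sum]
    exact Finset.sum_le_sum fun k hk => by
      have := hd2 k (by simpa using hk)
      nlinarith [hs0 k]
  have h2 : ∑ k ∈ Tᶜ, s k = ∑ k ∈ T, (1 - s k) := by
    have := Finset.sum_add_sum_compl T s
    rw [Finset.sum_sub_distrib, Finset.sum_const, nsmul_eq_mul, mul_one]
    linarith [this, hsum]
  have h3 : c * ∑ k ∈ T, (1 - s k) ≤ ∑ k ∈ T, (1 - s k) * d k := by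
    rw [Finset.mul_sum]
    exact Finset.sum_le_sum fun k hk => by
      have := hd1 k hk; have := hs1 k; nlinarith
  have h4 : ∑ k ∈ T, s k * d k + ∑ k ∈ T, (1 - s k) * d k = ∑ k ∈ T, d k := by
    rw [← Finset.sum_add_distrib]; apply Finset.sum_congr rfl; intros; ring
  have h2c : c * ∑ k ∈ Tᶜ, s k = c * ∑ k ∈ T, (1 - s k) := by rw [h2]
  linarith [hsplit, h1, h2c, h3, h4]

-- Auxiliary: column/row norms of unitary matrices
lemma stmt11_col {p : ℕ} (W : Matrix (Fin p) (Fin p) ℂ)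
    (hW : W ∈ Matrix.unitaryGroup (Fin p) ℂ) (k : Fin p) :
    ∑ j, Complex.normSq (W j k) = 1 := by
  have h : Wᴴ * W = 1 := by
    have := (Matrix.mem_unitaryGroup_iff'.mp hW)
    simpa [Matrix.star_eq_conjTranspose] using this
  have := congrArg (fun M => (M k k).re) h
  simp [Matrix.mul_apply, Matrix.one_apply, Matrix.conjTranspose_apply, Complex.re_sum] at this
  rw [← this]
  apply Finset.sum_congr rfl
  intro j _
  simp [Complex.normSq_apply, Complex.mul_re]

lemma stmt11_row {p : ℕ} (W : Matrix (Fin p) (Fin p) ℂ)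
    (hW : W ∈ Matrix.unitaryGroup (Fin p) ℂ) (j : Fin p) :
    ∑ k, Complex.normSq (W j k) = 1 := by
  have h : W * Wᴴ = 1 := by
    have := (Matrix.mem_unitaryGroup_iff.mp hW)
    simpa [Matrix.star_eq_conjTranspose] using this
  have := congrArg (fun M => (M j j).re) h
  simp [Matrix.mul_apply, Matrix.one_apply, Matrix.conjTranspose_apply, Complex.re_sum] at this
  rw [← this]
  apply Finset.sum_congr rfl
  intro k _
  simp [Complex.normSq_apply, Complex.mul_re]

noncomputable def stmt11_S (p n : ℕ) (β : Fin n → ℝ) : Matrix (Fin p) (Fin n) ℂ :=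
  Matrix.of fun (k : Fin p) (l : Fin n) =>
    if (l : ℕ) + p = n + (k : ℕ) then Complex.ofReal (β l) else 0

lemma stmt11_StS {p n : ℕ} (β : Fin n → ℝ)
    (hzero : ∀ k : Fin n, (k : ℕ) + p < n → β k = 0) :
    (stmt11_S p n β)ᴴ * (stmt11_S p n β) = Matrix.diagonal (fun l => ((β l : ℂ))^2) := by
  ext l l'
  simp only [Matrix.mul_apply, Matrix.conjTranspose_apply, stmt11_S, Matrix.of_apply,
    Matrix.diagonal_apply]
  by_cases hll : l = l'
  · subst hll
    simp only [if_pos rfl]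
    by_cases hl : n ≤ (l : ℕ) + p
    · have hk : ((l : ℕ) + p - n) < p := by omega
      rw [Finset.sum_eq_single (⟨(l : ℕ) + p - n, hk⟩ : Fin p)]
      · have : (l : ℕ) + p = n + ((l:ℕ) + p - n) := by omega
        simp only [if_pos this]
        simp [← Complex.ofReal_pow, sq, Complex.conj_ofReal]
      · intro k _ hk2
        have : ¬ ((l : ℕ) + p = n + (k : ℕ)) := by
          intro h; apply hk2; apply Fin.ext; simp; omega
        simp [this]
      · intro h; exact absurd (Finset.mem_univ _) h
    · have hb : β l = 0 := hzero l (by omega)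
      rw [Finset.sum_eq_zero]
      · simp [hb]
      · intro k _
        have : ¬ ((l : ℕ) + p = n + (k : ℕ)) := by omega
        simp [this]
  · simp only [if_neg hll]
    apply Finset.sum_eq_zero
    intro k _
    have hne : (l : ℕ) ≠ (l' : ℕ) := fun h => hll (Fin.ext h)
    by_cases h1 : (l : ℕ) + p = n + (k : ℕ)
    · have h2 : ¬ ((l' : ℕ) + p = n + (k : ℕ)) := by omega
      simp [h2]
    · simp [h1]

lemma stmt11_SSt {p n : ℕ} (hpn : p ≤ n) (β : Fin n → ℝ) :
    (stmt11_S p n β) * (stmt11_S p n β)ᴴ =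
      Matrix.diagonal (fun k : Fin p => ((β ⟨n - p + (k:ℕ), by omega⟩ : ℂ))^2) := by
  ext k k'
  simp only [Matrix.mul_apply, Matrix.conjTranspose_apply, stmt11_S, Matrix.of_apply,
    Matrix.diagonal_apply]
  by_cases hkk : k = k'
  · subst hkk
    simp only [if_pos rfl]
    have hl : n - p + (k : ℕ) < n := by omega
    rw [Finset.sum_eq_single (⟨n - p + (k:ℕ), hl⟩ : Fin n)]
    · have : (n - p + (k:ℕ)) + p = n + (k : ℕ) := by omega
      simp only [this, if_pos rfl]
      simp [← Complex.ofReal_pow, sq, Complex.conj_ofReal]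
    · intro l _ hl2
      have : ¬ ((l : ℕ) + p = n + (k : ℕ)) := by
        intro h; apply hl2; apply Fin.ext; simp; omega
      simp [this]
    · intro h; exact absurd (Finset.mem_univ _) h
  · simp only [if_neg hkk]
    apply Finset.sum_eq_zero
    intro l _
    have hne : (k : ℕ) ≠ (k' : ℕ) := fun h => hkk (Fin.ext h)
    by_cases h1 : (l : ℕ) + p = n + (k : ℕ)
    · have h2 : ¬ ((l : ℕ) + p = n + (k' : ℕ)) := by omega
      simp [h2]
    · simp [h1]

theorem stmt11
    {m p n : ℕ} (hpn : p ≤ n)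
    (A : Matrix (Fin m) (Fin n) ℂ) (B : Matrix (Fin p) (Fin n) ℂ)
    (hrank : (Matrix.fromRows A B).rank = n)
    (V : Matrix (Fin p) (Fin p) ℂ) (hV : V ∈ Matrix.unitaryGroup (Fin p) ℂ)
    (R : Matrix (Fin n) (Fin n) ℂ) (hR : IsUnit R.det)
    (β : Fin n → ℝ)
    (hβ0 : ∀ k, 0 ≤ β k) (hβ1 : ∀ k, β k ≤ 1) (hmono : Monotone β)
    (hzero : ∀ k : Fin n, (k : ℕ) + p < n → β k = 0)
    (hB : B = V * (Matrix.of fun (k : Fin p) (l : Fin n) =>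
        if (l : ℕ) + p = n + (k : ℕ) then Complex.ofReal (β l) else 0) * R)
    (hAA : Aᴴ * A = Rᴴ * Matrix.diagonal (fun l => Complex.ofReal (1 - β l ^ 2)) * R)
    (i : Fin n) (hip : n ≤ p + (i : ℕ)) :
(⨆ Φ : Matrix.unitaryGroup (Fin p) ℂ,
      (Matrix.trace (Bᴴ * (Φ : Matrix (Fin p) (Fin p) ℂ)ᴴ *
        Matrix.diagonal (fun k : Fin p => if p + (i : ℕ) ≤ (k : ℕ) + n then (1 : ℂ) else 0) *
        (Φ : Matrix (Fin p) (Fin p) ℂ) * B * (Aᴴ * A + Bᴴ * B)⁻¹)).re) =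
      ∑ k ∈ Finset.Ici i, β k ^ 2 := by
  classical
  set S : Matrix (Fin p) (Fin n) ℂ := stmt11_S p n β with hSdef
  have hBS : B = V * S * R := hB
  set P : Matrix (Fin p) (Fin p) ℂ :=
    Matrix.diagonal (fun k : Fin p => if p + (i : ℕ) ≤ (k : ℕ) + n then (1 : ℂ) else 0) with hPdef
  have hR' : IsUnit (Rᴴ).det := by rw [Matrix.det_conjTranspose]; exact hR.star
  have hVu : Vᴴ * V = 1 := by
    have := (Matrix.mem_unitaryGroup_iff'.mp hV)
    simpa [Matrix.star_eq_conjTranspose] using this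
  -- M = Rᴴ R
  have hM : Aᴴ * A + Bᴴ * B = Rᴴ * R := by
    have h1 : Bᴴ * B = Rᴴ * (Sᴴ * S) * R := by
      rw [hBS]
      simp only [Matrix.conjTranspose_mul, Matrix.mul_assoc]
      rw [← Matrix.mul_assoc Vᴴ V, hVu, Matrix.one_mul]
    rw [hAA, h1, stmt11_StS β hzero]
    rw [← Matrix.add_mul, ← Matrix.mul_add, Matrix.diagonal_add]
    have : (fun l => Complex.ofReal (1 - β l ^ 2) + ((β l : ℂ))^2) = fun _ => (1 : ℂ) := by
      funext l; push_cast; ring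
    rw [this, Matrix.diagonal_one, Matrix.mul_one]
  have hMinv : (Aᴴ * A + Bᴴ * B)⁻¹ = R⁻¹ * (Rᴴ)⁻¹ := by
    rw [hM, Matrix.mul_inv_rev]
  -- the real quantity
  set d : Fin p → ℝ := fun k => β ⟨n - p + (k:ℕ), by omega⟩ ^ 2 with hddef
  set c : Fin p → ℝ := fun j => if p + (i : ℕ) ≤ (j : ℕ) + n then (1:ℝ) else 0 with hcdef
  set F : Matrix (Fin p) (Fin p) ℂ → ℝ :=
    fun W => ∑ k, (∑ j, c j * Complex.normSq (W j k)) * d k with hFdef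
  set T : Finset (Fin p) := Finset.univ.filter (fun k => p + (i : ℕ) ≤ (k : ℕ) + n) with hTdef
  -- trace formula
  have key : ∀ Φ : Matrix (Fin p) (Fin p) ℂ,
      (Matrix.trace (Bᴴ * Φᴴ * P * Φ * B * (Aᴴ * A + Bᴴ * B)⁻¹)).re = F (Φ * V) := by
    intro Φ
    set W := Φ * V with hWdef
    have hmat : Bᴴ * Φᴴ * P * Φ * B * (Aᴴ * A + Bᴴ * B)⁻¹ =
        Rᴴ * (Sᴴ * (Wᴴ * P * W) * S) * (Rᴴ)⁻¹ := by
      rw [hMinv, hBS, hWdef]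
      simp only [Matrix.conjTranspose_mul, Matrix.mul_assoc]
      rw [Matrix.mul_nonsing_inv_cancel_left R _ hR]
    rw [hmat]
    have htr1 : Matrix.trace (Rᴴ * (Sᴴ * (Wᴴ * P * W) * S) * (Rᴴ)⁻¹) =
        Matrix.trace (Sᴴ * (Wᴴ * P * W) * S) := by
      rw [Matrix.trace_mul_cycle, Matrix.nonsing_inv_mul _ hR', Matrix.one_mul]
    have htr2 : Matrix.trace (Sᴴ * (Wᴴ * P * W) * S) =
        Matrix.trace ((Wᴴ * P * W) * (S * Sᴴ)) := by
      rw [Matrix.trace_mul_cycle, Matrix.trace_mul_comm]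
    rw [htr1, htr2, stmt11_SSt hpn β]
    -- entrywise computation
    have hterm : Matrix.trace ((Wᴴ * P * W) *
        Matrix.diagonal (fun k : Fin p => ((β ⟨n - p + (k:ℕ), by omega⟩ : ℂ))^2)) =
        Complex.ofReal (F W) := by
      rw [Matrix.trace, hFdef, Matrix.mul_assoc Wᴴ P W]
      push_cast
      simp only [Matrix.diag_apply, Matrix.mul_diagonal]
      apply Finset.sum_congr rfl
      intro k _
      simp only [Matrix.mul_apply, Matrix.conjTranspose_apply, hPdef, Matrix.diagonal_apply,
        ite_mul, zero_mul, Finset.sum_ite_eq, Finset.mem_univ, if_true]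
      rw [Finset.sum_mul, Finset.sum_mul]
      apply Finset.sum_congr rfl
      intro j _
      by_cases h : p + (i : ℕ) ≤ (j : ℕ) + n
      · simp only [if_pos h, hcdef, hddef, one_mul]
        rw [Complex.star_def, mul_comm ((starRingEnd ℂ) (W j k)) (W j k), Complex.mul_conj]
        push_cast [if_pos h]
        ring
      · simp [if_neg h, hcdef, h]
    rw [hterm, Complex.ofReal_re]
  -- the target value
  have hTsum : ∑ k ∈ T, d k = ∑ k ∈ Finset.Ici i, β k ^ 2 := by
    apply Finset.sum_nbij' (fun k : Fin p => (⟨n - p + (k:ℕ), by have := k.2; omega⟩ : Fin n))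
      (fun l : Fin n => (⟨(l:ℕ) + p - n, by have := l.2; omega⟩ : Fin p))
    · intro k hk
      rw [hTdef, Finset.mem_filter] at hk
      rw [Finset.mem_Ici, Fin.le_def]
      simp; omega
    · intro l hl
      rw [Finset.mem_Ici, Fin.le_def] at hl
      rw [hTdef, Finset.mem_filter]
      refine ⟨Finset.mem_univ _, ?_⟩
      simp; omega
    · intro k hk; apply Fin.ext; simp; omega
    · intro l hl
      rw [Finset.mem_Ici, Fin.le_def] at hl
      apply Fin.ext; simp; omega
    · intro k hk; rw [hddef]
  -- upper bound
  have hbound : ∀ W ∈ Matrix.unitaryGroup (Fin p) ℂ, F W ≤ ∑ k ∈ Finset.Ici i, β k ^ 2 := by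
    intro W hW
    rw [← hTsum, hFdef]
    apply stmt11_bnd _ _ _ (β i ^ 2)
    · intro k
      apply Finset.sum_nonneg
      intro j _
      apply mul_nonneg _ (Complex.normSq_nonneg _)
      rw [hcdef]; positivity
    · intro k
      calc ∑ j, c j * Complex.normSq (W j k) ≤ ∑ j, Complex.normSq (W j k) := by
            apply Finset.sum_le_sum
            intro j _
            have h1 : c j ≤ 1 := by rw [hcdef]; dsimp only; split <;> norm_num
            nlinarith [Complex.normSq_nonneg (W j k)]
        _ = 1 := stmt11_col W hW k
    · rw [Finset.sum_comm]
      have : ∀ j : Fin p, ∑ k, c j * Complex.normSq (W j k) = c j := by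
        intro j
        rw [← Finset.mul_sum, stmt11_row W hW j, mul_one]
      rw [Finset.sum_congr rfl fun j _ => this j, hcdef, hTdef]
      rw [Finset.sum_boole]
    · intro k hk
      rw [hTdef, Finset.mem_filter] at hk
      rw [hddef]
      have hle : i ≤ (⟨n - p + (k:ℕ), by omega⟩ : Fin n) := by
        rw [Fin.le_def]; simp; omega
      exact pow_le_pow_left₀ (hβ0 i) (hmono hle) 2
    · intro k hk
      rw [hTdef, Finset.mem_filter] at hk
      rw [hddef]
      have hle : (⟨n - p + (k:ℕ), by omega⟩ : Fin n) ≤ i := by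
        rw [Fin.le_def]; simp
        simp at hk; omega
      exact pow_le_pow_left₀ (hβ0 _) (hmono hle) 2
  -- attained at identity
  have hone : F 1 = ∑ k ∈ Finset.Ici i, β k ^ 2 := by
    rw [← hTsum, hFdef]
    have : ∀ k : Fin p, (∑ j, c j * Complex.normSq ((1 : Matrix (Fin p) (Fin p) ℂ) j k)) = c k := by
      intro k
      rw [Finset.sum_eq_single k]
      · simp [Matrix.one_apply]
      · intro j _ hj; simp [Matrix.one_apply, hj]
      · intro h; exact absurd (Finset.mem_univ _) h
    dsimp only
    calc ∑ k : Fin p, (∑ j, c j * Complex.normSq ((1 : Matrix (Fin p) (Fin p) ℂ) j k)) * d k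
        = ∑ k : Fin p, c k * d k := Finset.sum_congr rfl fun k _ => by rw [this k]
      _ = ∑ k ∈ T, d k := by
          simp only [hcdef, hTdef, Finset.sum_filter, ite_mul, one_mul, zero_mul]
  -- assemble
  haveI : Nonempty (Matrix.unitaryGroup (Fin p) ℂ) := ⟨1⟩
  apply le_antisymm
  · apply ciSup_le
    intro Φ
    exact le_of_eq_of_le (key ↑Φ) (hbound _ (mul_mem Φ.2 hV))
  · have hVs : (star V : Matrix (Fin p) (Fin p) ℂ) ∈ Matrix.unitaryGroup (Fin p) ℂ :=
      Unitary.star_mem hV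
    set Φ₀ : Matrix.unitaryGroup (Fin p) ℂ := ⟨star V, hVs⟩ with hΦ₀
    have hW1 : (star V : Matrix (Fin p) (Fin p) ℂ) * V = 1 := hV.1
    have hfΦ₀ : (Matrix.trace (Bᴴ * (Φ₀ : Matrix (Fin p) (Fin p) ℂ)ᴴ * P *
        (Φ₀ : Matrix (Fin p) (Fin p) ℂ) * B * (Aᴴ * A + Bᴴ * B)⁻¹)).re =
        ∑ k ∈ Finset.Ici i, β k ^ 2 := by
      rw [key ↑Φ₀]
      have hc : (Φ₀ : Matrix (Fin p) (Fin p) ℂ) = star V := rfl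
      rw [hc, hW1, hone]
    have hbdd : BddAbove (Set.range (fun Φ : Matrix.unitaryGroup (Fin p) ℂ =>
        (Matrix.trace (Bᴴ * (Φ : Matrix (Fin p) (Fin p) ℂ)ᴴ * P *
        (Φ : Matrix (Fin p) (Fin p) ℂ) * B * (Aᴴ * A + Bᴴ * B)⁻¹)).re)) := by
      refine ⟨∑ k ∈ Finset.Ici i, β k ^ 2, ?_⟩
      rintro x ⟨Φ, rfl⟩
      exact le_of_eq_of_le (key ↑Φ) (hbound _ (mul_mem Φ.2 hV))
    have := le_ciSup hbdd Φ₀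
    rw [hfΦ₀] at this
    exact this
end

section
/- Let n ≤ m and let {A,B} be an (m,p,n)-GMP with GSVD as in the context, with generalized singular values (αᵢ, βᵢ). Then for every 1 ≤ i ≤ ⌊n/2⌋ the following two model formulations hold simultaneously: (i) αᵢ² = max_{Φ ∈ 𝕌_m} Re tr(Aᴴ Φᴴ Q_i Φ A (AᴴA + BᴴB)^{-1}) − max_{Φ ∈ 𝕌_m} Re tr(Aᴴ Φᴴ Q_{i-1} Φ A (AᴴA + BᴴB)^{-1}); and (ii) αᵢ = max_{Π₁ ∈ 𝕌_m, Π₂ ∈ 𝕌_n} |tr(Π₁ A (AᴴA + BᴴB)^{-1/2} Π₂ 𝒢_i)| − max_{Π₁ ∈ 𝕌_m, Π₂ ∈ 𝕌_n} |tr(Π₁ A (AᴴA + BᴴB)^{-1/2} Π₂ 𝒢_{i-1})|. -/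
open Matrix BigOperators
open scoped ComplexOrder

section aux
open Finset
variable {m n : ℕ}

lemma card_filt {r : ℕ} (h : r ≤ m) :
    (Finset.univ.filter (fun k : Fin m => (k : ℕ) < r)).card = r := by
  have : Finset.univ.filter (fun k : Fin m => (k : ℕ) < r)
      = Finset.map (Fin.castLEEmb h) Finset.univ := by
    ext k
    simp only [mem_filter, mem_univ, true_and, mem_map]
    constructor
    · intro hk; exact ⟨⟨k, hk⟩, by simp [Fin.castLEEmb, Fin.ext_iff]⟩
    · rintro ⟨j, rfl⟩; simpa using j.isLt
  rw [this, Finset.card_map, Finset.card_univ, Fintype.card_fin]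

lemma key_ineq (α w : Fin n → ℝ) (hα0 : ∀ k, 0 ≤ α k) (hmono : Antitone α)
    (hw0 : ∀ l, 0 ≤ w l) (hw1 : ∀ l, w l ≤ 1) (r : ℕ) (hr : r ≤ n)
    (hws : ∑ l, w l ≤ r) :
    ∑ l, α l * w l ≤ ∑ l ∈ Finset.univ.filter (fun l : Fin n => (l : ℕ) < r), α l := by
  rcases Nat.eq_zero_or_pos r with rfl | hrpos
  · have : ∀ l, w l = 0 := by
      intro l
      have h1 : ∑ l, w l = 0 := le_antisymm (by simpa using hws) (Finset.sum_nonneg fun l _ => hw0 l)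
      have := (Finset.sum_eq_zero_iff_of_nonneg (fun l _ => hw0 l)).mp h1
      exact this l (Finset.mem_univ l)
    simp [this]
  · set c : ℝ := α ⟨r - 1, by omega⟩ with hc
    have hcge : ∀ l : Fin n, (l : ℕ) < r → c ≤ α l := fun l hl =>
      hmono (by simp [Fin.le_def]; omega)
    have hcle : ∀ l : Fin n, r ≤ (l : ℕ) → α l ≤ c := fun l hl =>
      hmono (by simp [Fin.le_def]; omega)
    have hc0 : 0 ≤ c := hα0 _
    set P := Finset.univ.filter (fun l : Fin n => (l : ℕ) < r) with hP
    have hsplit : ∑ l, α l * w l = ∑ l ∈ P, α l * w l + ∑ l ∈ Pᶜ, α l * w l :=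
      (Finset.sum_add_sum_compl P _).symm
    have hwsplit : ∑ l, w l = ∑ l ∈ P, w l + ∑ l ∈ Pᶜ, w l :=
      (Finset.sum_add_sum_compl P _).symm
    have hcard : ∑ l ∈ P, (1 : ℝ) = r := by
      rw [Finset.sum_const, nsmul_eq_mul, mul_one, card_filt (hr.trans (le_refl n))]
    have h1 : ∑ l ∈ P, α l * w l ≤ ∑ l ∈ P, (α l - c * (1 - w l)) := by
      refine Finset.sum_le_sum fun l hl => ?_
      have hlP : (l : ℕ) < r := (Finset.mem_filter.mp hl).2
      nlinarith [hcge l hlP, hw1 l, hw0 l, hα0 l]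
    have h2 : ∑ l ∈ Pᶜ, α l * w l ≤ ∑ l ∈ Pᶜ, c * w l := by
      refine Finset.sum_le_sum fun l hl => ?_
      have hlP : ¬ (l : ℕ) < r := by
        have := Finset.mem_compl.mp hl; simpa [hP] using this
      nlinarith [hcle l (by omega), hw0 l]
    have h3 : ∑ l ∈ P, (α l - c * (1 - w l)) = ∑ l ∈ P, α l - c * (r - ∑ l ∈ P, w l) := by
      rw [Finset.sum_sub_distrib, ← Finset.mul_sum]
      congr 1
      rw [Finset.sum_sub_distrib, hcard]
    have h4 : ∑ l ∈ Pᶜ, c * w l = c * ∑ l ∈ Pᶜ, w l := by rw [Finset.mul_sum]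
    have : c * (r - ∑ l ∈ P, w l) ≥ c * ∑ l ∈ Pᶜ, w l := by
      apply mul_le_mul_of_nonneg_left _ hc0
      linarith [hwsplit, hws]
    linarith [h1, h2, h3, h4, hsplit, this]

lemma sum_ite_coe (h : n ≤ m) (l : Fin n) (f : Fin m → ℂ) :
    (∑ k : Fin m, if (k : ℕ) = (l : ℕ) then f k else 0) = f (Fin.castLE h l) := by
  rw [Finset.sum_eq_single (Fin.castLE h l)]
  · simp
  · intro b _ hb
    rw [if_neg]
    intro hbl
    exact hb (Fin.ext (by simpa using hbl))
  · simp

lemma col_norm {V : Matrix (Fin m) (Fin m) ℂ} (hV : Vᴴ * V = 1) (j : Fin m) :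
    ∑ k : Fin m, Complex.normSq (V k j) = 1 := by
  have h := congr_fun (congr_fun hV j) j
  simp only [Matrix.mul_apply, conjTranspose_apply, Matrix.one_apply_eq] at h
  have h2 : (((∑ k : Fin m, Complex.normSq (V k j)) : ℝ) : ℂ) = 1 := by
    rw [Complex.ofReal_sum, ← h]
    exact Finset.sum_congr rfl fun k _ => by
      rw [Complex.normSq_eq_conj_mul_self, starRingEnd_apply]
  exact_mod_cast h2

lemma row_norm {V : Matrix (Fin m) (Fin m) ℂ} (hV : V * Vᴴ = 1) (k : Fin m) :
    ∑ j : Fin m, Complex.normSq (V k j) = 1 := by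
  have h := congr_fun (congr_fun hV k) k
  simp only [Matrix.mul_apply, conjTranspose_apply, Matrix.one_apply_eq] at h
  have h2 : (((∑ j : Fin m, Complex.normSq (V k j)) : ℝ) : ℂ) = 1 := by
    rw [Complex.ofReal_sum, ← h]
    exact Finset.sum_congr rfl fun j _ => by
      rw [Complex.normSq_eq_conj_mul_self, starRingEnd_apply]; ring
  exact_mod_cast h2

lemma sum_castLE_le (hnm : n ≤ m) (f : Fin m → ℝ) (hf : ∀ j, 0 ≤ f j) :
    ∑ l : Fin n, f (Fin.castLE hnm l) ≤ ∑ j : Fin m, f j := by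
  have : ∑ l : Fin n, f (Fin.castLE hnm l) = ∑ j ∈ Finset.univ.map (Fin.castLEEmb hnm), f j := by
    rw [Finset.sum_map]; rfl
  rw [this]
  exact Finset.sum_le_sum_of_subset_of_nonneg (Finset.subset_univ _) (fun j _ _ => hf j)

lemma trace_XE (hnm : n ≤ m) (α : Fin n → ℝ)
    (E : Matrix (Fin m) (Fin n) ℂ)
    (hE : ∀ k l, E k l = if (k : ℕ) = (l : ℕ) then (α l : ℂ) else 0)
    (X : Matrix (Fin n) (Fin m) ℂ) :
    Matrix.trace (X * E) = ∑ l : Fin n, (α l : ℂ) * X l (Fin.castLE hnm l) := by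
  simp only [Matrix.trace, Matrix.diag, Matrix.mul_apply, hE]
  refine Finset.sum_congr rfl fun l _ => ?_
  rw [show (∑ k : Fin m, X l k * if (k : ℕ) = (l : ℕ) then (α l : ℂ) else 0)
      = ∑ k : Fin m, if (k : ℕ) = (l : ℕ) then X l k * (α l : ℂ) else 0 from
    Finset.sum_congr rfl fun k _ => by split_ifs <;> simp]
  rw [sum_ite_coe hnm l]
  ring

lemma trace_EWE (hnm : n ≤ m) (α : Fin n → ℝ)
    (E : Matrix (Fin m) (Fin n) ℂ)
    (hE : ∀ k l, E k l = if (k : ℕ) = (l : ℕ) then (α l : ℂ) else 0)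
    (W : Matrix (Fin m) (Fin m) ℂ) :
    Matrix.trace (Eᴴ * W * E) = ∑ l : Fin n,
      (α l : ℂ)^2 * W (Fin.castLE hnm l) (Fin.castLE hnm l) := by
  rw [trace_XE hnm α E hE (Eᴴ * W)]
  refine Finset.sum_congr rfl fun l _ => ?_
  have : (Eᴴ * W) l (Fin.castLE hnm l) = (α l : ℂ) * W (Fin.castLE hnm l) (Fin.castLE hnm l) := by
    simp only [Matrix.mul_apply, conjTranspose_apply, hE]
    rw [show (∑ k : Fin m, star (if (k : ℕ) = (l : ℕ) then (α l : ℂ) else 0) * W k (Fin.castLE hnm l))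
        = ∑ k : Fin m, if (k : ℕ) = (l : ℕ) then (α l : ℂ) * W k (Fin.castLE hnm l) else 0 from
      Finset.sum_congr rfl fun k _ => by split_ifs <;> simp [Complex.star_def, Complex.conj_ofReal]]
    rw [sum_ite_coe hnm l]
  rw [this]; ring

lemma diag_VQV (V : Matrix (Fin m) (Fin m) ℂ) (r : ℕ) (j : Fin m) :
    (Vᴴ * Matrix.diagonal (fun k : Fin m => if (k : ℕ) < r then (1:ℂ) else 0) * V) j j
    = ((∑ k ∈ Finset.univ.filter (fun k : Fin m => (k : ℕ) < r), Complex.normSq (V k j) : ℝ) : ℂ) := by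
  rw [Matrix.mul_assoc]
  simp only [Matrix.mul_apply, conjTranspose_apply, Matrix.diagonal_apply, ite_mul, zero_mul,
    one_mul, Finset.sum_ite_eq, Finset.mem_univ, if_true]
  rw [Finset.sum_filter, Complex.ofReal_sum]
  refine Finset.sum_congr rfl fun k _ => ?_
  split_ifs with h
  · rw [Complex.normSq_eq_conj_mul_self, starRingEnd_apply]
  · simp

lemma sup1 (hnm : n ≤ m)
    (α : Fin n → ℝ) (hα0 : ∀ k, 0 ≤ α k) (hmono : Antitone α)
    (U : Matrix (Fin m) (Fin m) ℂ) (hU : U ∈ Matrix.unitaryGroup (Fin m) ℂ)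
    (E : Matrix (Fin m) (Fin n) ℂ)
    (hE : ∀ k l, E k l = if (k : ℕ) = (l : ℕ) then (α l : ℂ) else 0)
    (R : Matrix (Fin n) (Fin n) ℂ) (hR : IsUnit R.det)
    (A : Matrix (Fin m) (Fin n) ℂ) (hA : A = U * E * R)
    (M : Matrix (Fin n) (Fin n) ℂ) (hM : M = Rᴴ * R)
    (r : ℕ) (hr : r ≤ n) :
    (⨆ Φ : Matrix.unitaryGroup (Fin m) ℂ,
      (Matrix.trace (Aᴴ * (Φ : Matrix (Fin m) (Fin m) ℂ)ᴴ *
        Matrix.diagonal (fun k : Fin m => if (k : ℕ) < r then (1 : ℂ) else 0) *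
        (Φ : Matrix (Fin m) (Fin m) ℂ) * A * M⁻¹)).re)
    = ∑ l ∈ Finset.univ.filter (fun l : Fin n => (l : ℕ) < r), α l ^ 2 := by
  haveI : Nonempty (Matrix.unitaryGroup (Fin m) ℂ) := ⟨1⟩
  set Q : Matrix (Fin m) (Fin m) ℂ :=
    Matrix.diagonal (fun k : Fin m => if (k : ℕ) < r then (1 : ℂ) else 0) with hQ
  set filtm := Finset.univ.filter (fun k : Fin m => (k : ℕ) < r) with hfiltm
  -- step 1: value of the trace for each unitary Φ
  have hdetH : IsUnit (Rᴴ).det := by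
    rw [Matrix.det_conjTranspose]; exact hR.star
  have step1 : ∀ Φ : Matrix (Fin m) (Fin m) ℂ,
      (Matrix.trace (Aᴴ * Φᴴ * Q * Φ * A * M⁻¹)).re
      = ∑ l : Fin n, α l ^ 2 * ∑ k ∈ filtm, Complex.normSq ((Φ * U) k (Fin.castLE hnm l)) := by
    intro Φ
    have e1 : Aᴴ * Φᴴ * Q * Φ * A * M⁻¹
        = Rᴴ * (Eᴴ * ((Φ * U)ᴴ * Q * (Φ * U)) * E) * (Rᴴ)⁻¹ := by
      rw [hM, hA, Matrix.mul_inv_rev]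
      simp only [conjTranspose_mul, Matrix.mul_assoc]
      rw [show R * (R⁻¹ * (Rᴴ)⁻¹) = (Rᴴ)⁻¹ by
        rw [← Matrix.mul_assoc, Matrix.mul_nonsing_inv R hR, Matrix.one_mul]]
    rw [e1]
    rw [Matrix.trace_mul_cycle, ← Matrix.mul_assoc, Matrix.nonsing_inv_mul _ hdetH,
      Matrix.one_mul]
    rw [trace_EWE hnm α E hE]
    rw [show (∑ l : Fin n, (α l : ℂ)^2 *
        ((Φ * U)ᴴ * Q * (Φ * U)) (Fin.castLE hnm l) (Fin.castLE hnm l))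
      = ((∑ l : Fin n, α l ^2 * ∑ k ∈ filtm, Complex.normSq ((Φ * U) k (Fin.castLE hnm l)) : ℝ) : ℂ) by
      rw [Complex.ofReal_sum]
      refine Finset.sum_congr rfl fun l _ => ?_
      rw [diag_VQV (Φ * U) r (Fin.castLE hnm l)]
      push_cast
      ring]
    exact Complex.ofReal_re _
  -- unitarity facts
  have hmono2 : Antitone (fun l => α l ^ 2) := by
    intro a b hab
    have h1 := hmono hab
    have := hα0 b
    simp only
    nlinarith [hα0 a]
  -- step 2: upper bound
  have step2 : ∀ Φ : Matrix.unitaryGroup (Fin m) ℂ,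
      (Matrix.trace (Aᴴ * (Φ : Matrix (Fin m) (Fin m) ℂ)ᴴ * Q * (Φ : Matrix (Fin m) (Fin m) ℂ) * A * M⁻¹)).re
      ≤ ∑ l ∈ Finset.univ.filter (fun l : Fin n => (l : ℕ) < r), α l ^ 2 := by
    intro Φ
    rw [step1 Φ]
    set V := (Φ : Matrix (Fin m) (Fin m) ℂ) * U with hV
    have hVmem : V ∈ Matrix.unitaryGroup (Fin m) ℂ := mul_mem Φ.2 hU
    have hVl : Vᴴ * V = 1 := Matrix.mem_unitaryGroup_iff'.mp hVmem
    have hVr : V * Vᴴ = 1 := Matrix.mem_unitaryGroup_iff.mp hVmem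
    set w : Fin n → ℝ := fun l => ∑ k ∈ filtm, Complex.normSq (V k (Fin.castLE hnm l)) with hw
    have hw0 : ∀ l, 0 ≤ w l := fun l =>
      Finset.sum_nonneg fun k _ => Complex.normSq_nonneg _
    have hw1 : ∀ l, w l ≤ 1 := by
      intro l
      calc w l ≤ ∑ k : Fin m, Complex.normSq (V k (Fin.castLE hnm l)) :=
            Finset.sum_le_sum_of_subset_of_nonneg (Finset.filter_subset _ _)
              (fun k _ _ => Complex.normSq_nonneg _)
        _ = 1 := col_norm hVl _
    have hws : ∑ l, w l ≤ (r : ℝ) := by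
      rw [show ∑ l, w l = ∑ k ∈ filtm, ∑ l : Fin n, Complex.normSq (V k (Fin.castLE hnm l)) from
        Finset.sum_comm]
      calc ∑ k ∈ filtm, ∑ l : Fin n, Complex.normSq (V k (Fin.castLE hnm l))
          ≤ ∑ k ∈ filtm, (1:ℝ) := by
            refine Finset.sum_le_sum fun k _ => ?_
            calc ∑ l : Fin n, Complex.normSq (V k (Fin.castLE hnm l))
                ≤ ∑ j : Fin m, Complex.normSq (V k j) :=
                  sum_castLE_le hnm _ (fun j => Complex.normSq_nonneg _)
              _ = 1 := row_norm hVr _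
        _ = r := by
            rw [Finset.sum_const, nsmul_eq_mul, mul_one, hfiltm, card_filt (hr.trans hnm)]
    exact key_ineq (fun l => α l ^ 2) w (fun k => sq_nonneg _) hmono2 hw0 hw1 r hr hws
  -- step 3: the witness Φ = Uᴴ attains the bound
  have hUl : (star U) * U = 1 := Matrix.mem_unitaryGroup_iff'.mp hU
  have step3 : (Matrix.trace (Aᴴ * ((star U) : Matrix (Fin m) (Fin m) ℂ)ᴴ * Q * (star U) * A * M⁻¹)).re
      = ∑ l ∈ Finset.univ.filter (fun l : Fin n => (l : ℕ) < r), α l ^ 2 := by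
    rw [step1 (star U)]
    rw [show (star U) * U = (1 : Matrix (Fin m) (Fin m) ℂ) from hUl]
    have hterm : ∀ l : Fin n,
        ∑ k ∈ filtm, Complex.normSq ((1 : Matrix (Fin m) (Fin m) ℂ) k (Fin.castLE hnm l))
        = if (l : ℕ) < r then 1 else 0 := by
      intro l
      have : ∀ k : Fin m, Complex.normSq ((1 : Matrix (Fin m) (Fin m) ℂ) k (Fin.castLE hnm l))
          = if k = Fin.castLE hnm l then 1 else 0 := by
        intro k
        rw [Matrix.one_apply]
        split_ifs <;> simp
      rw [Finset.sum_congr rfl fun k _ => this k]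
      rw [Finset.sum_ite_eq' filtm (Fin.castLE hnm l) (fun _ => (1:ℝ))]
      simp [hfiltm]
    rw [Finset.sum_congr rfl fun l (_ : l ∈ Finset.univ) => by rw [hterm l]]
    rw [Finset.sum_filter]
    refine Finset.sum_congr rfl fun l _ => ?_
    split_ifs <;> simp
  -- combine
  apply le_antisymm
  · exact ciSup_le step2
  · have hmem : (star U) ∈ Matrix.unitaryGroup (Fin m) ℂ := Unitary.star_mem hU
    have hbdd : BddAbove (Set.range (fun Φ : Matrix.unitaryGroup (Fin m) ℂ =>
        (Matrix.trace (Aᴴ * (Φ : Matrix (Fin m) (Fin m) ℂ)ᴴ * Q * (Φ : Matrix (Fin m) (Fin m) ℂ) * A * M⁻¹)).re)) :=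
      ⟨_, Set.forall_mem_range.mpr step2⟩
    have h := le_ciSup hbdd (⟨star U, hmem⟩ : Matrix.unitaryGroup (Fin m) ℂ)
    calc ∑ l ∈ Finset.univ.filter (fun l : Fin n => (l : ℕ) < r), α l ^ 2
        = _ := step3.symm
      _ ≤ _ := h


lemma sum_ite_coe2 (h : n ≤ m) (a : Fin n) (c : Prop) [Decidable c] (f : Fin m → ℂ) :
    (∑ b : Fin m, if (a : ℕ) = (b : ℕ) ∧ c then f b else 0)
    = if c then f (Fin.castLE h a) else 0 := by
  split_ifs with hc
  · refine (Finset.sum_congr rfl fun b _ => ?_).trans (sum_ite_coe h a f)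
    simp [hc, eq_comm]
  · simp [hc]

lemma sup2 (hnm : n ≤ m)
    (α : Fin n → ℝ) (hα0 : ∀ k, 0 ≤ α k) (hmono : Antitone α)
    (U : Matrix (Fin m) (Fin m) ℂ) (hU : U ∈ Matrix.unitaryGroup (Fin m) ℂ)
    (E : Matrix (Fin m) (Fin n) ℂ)
    (hE : ∀ k l, E k l = if (k : ℕ) = (l : ℕ) then (α l : ℂ) else 0)
    (T : Matrix (Fin n) (Fin n) ℂ) (hT : T ∈ Matrix.unitaryGroup (Fin n) ℂ)
    (A : Matrix (Fin m) (Fin n) ℂ) (S : Matrix (Fin n) (Fin n) ℂ)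
    (hC : A * S⁻¹ = U * E * T)
    (r : ℕ) (hr : r ≤ n) :
    (⨆ W1 : Matrix.unitaryGroup (Fin m) ℂ, ⨆ W2 : Matrix.unitaryGroup (Fin n) ℂ,
      ‖(Matrix.trace ((W1 : Matrix (Fin m) (Fin m) ℂ) * A * S⁻¹ *
        (W2 : Matrix (Fin n) (Fin n) ℂ) *
        Matrix.of (fun (k : Fin n) (l : Fin m) =>
          if (k : ℕ) = (l : ℕ) ∧ (k : ℕ) < r then (1 : ℂ) else 0)))‖)
    = ∑ l ∈ Finset.univ.filter (fun l : Fin n => (l : ℕ) < r), α l := by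
  haveI : Nonempty (Matrix.unitaryGroup (Fin m) ℂ) := ⟨1⟩
  haveI : Nonempty (Matrix.unitaryGroup (Fin n) ℂ) := ⟨1⟩
  set G : Matrix (Fin n) (Fin m) ℂ := Matrix.of (fun (k : Fin n) (l : Fin m) =>
    if (k : ℕ) = (l : ℕ) ∧ (k : ℕ) < r then (1 : ℂ) else 0) with hG
  set filtn := Finset.univ.filter (fun l : Fin n => (l : ℕ) < r) with hfiltn
  set t := ∑ l ∈ filtn, α l with ht
  -- entry of V2 * G * V1
  have hXentry : ∀ (V2 : Matrix (Fin n) (Fin n) ℂ) (V1 : Matrix (Fin m) (Fin m) ℂ) (l : Fin n),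
      (V2 * G * V1) l (Fin.castLE hnm l)
      = ∑ a ∈ filtn, V2 l a * V1 (Fin.castLE hnm a) (Fin.castLE hnm l) := by
    intro V2 V1 l
    rw [Matrix.mul_assoc]
    simp only [Matrix.mul_apply, hG, Matrix.of_apply]
    have inner : ∀ a : Fin n,
        (∑ b : Fin m, (if (a : ℕ) = (b : ℕ) ∧ (a : ℕ) < r then (1:ℂ) else 0) * V1 b (Fin.castLE hnm l))
        = if (a : ℕ) < r then V1 (Fin.castLE hnm a) (Fin.castLE hnm l) else 0 := by
      intro a
      rw [show (∑ b : Fin m, (if (a : ℕ) = (b : ℕ) ∧ (a : ℕ) < r then (1:ℂ) else 0) * V1 b (Fin.castLE hnm l))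
          = ∑ b : Fin m, if (a : ℕ) = (b : ℕ) ∧ (a : ℕ) < r then V1 b (Fin.castLE hnm l) else 0 from
        Finset.sum_congr rfl fun b _ => by split_ifs <;> simp]
      exact sum_ite_coe2 hnm a _ _
    calc (∑ a : Fin n, V2 l a * ∑ b : Fin m,
            (if (a : ℕ) = (b : ℕ) ∧ (a : ℕ) < r then (1:ℂ) else 0) * V1 b (Fin.castLE hnm l))
        = ∑ a : Fin n, if (a : ℕ) < r then V2 l a * V1 (Fin.castLE hnm a) (Fin.castLE hnm l) else 0 := by
          refine Finset.sum_congr rfl fun a _ => ?_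
          rw [inner a]
          split_ifs <;> simp
      _ = ∑ a ∈ filtn, V2 l a * V1 (Fin.castLE hnm a) (Fin.castLE hnm l) := by
          rw [← Finset.sum_filter]
  -- trace formula
  have htr : ∀ (W1 : Matrix (Fin m) (Fin m) ℂ) (W2 : Matrix (Fin n) (Fin n) ℂ),
      Matrix.trace (W1 * A * S⁻¹ * W2 * G)
      = ∑ l : Fin n, (α l : ℂ) * ((T * W2) * G * (W1 * U)) l (Fin.castLE hnm l) := by
    intro W1 W2
    have e1 : W1 * A * S⁻¹ * W2 * G = (W1 * U * E) * (T * W2 * G) := by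
      rw [Matrix.mul_assoc W1 A S⁻¹, hC]
      simp only [Matrix.mul_assoc]
    rw [e1, Matrix.trace_mul_comm]
    have e2 : (T * W2 * G) * (W1 * U * E) = ((T * W2) * G * (W1 * U)) * E := by
      simp only [Matrix.mul_assoc]
    rw [e2, trace_XE hnm α E hE]
  -- upper bound for each pair of unitaries
  have bound : ∀ (W1 : Matrix.unitaryGroup (Fin m) ℂ) (W2 : Matrix.unitaryGroup (Fin n) ℂ),
      ‖(Matrix.trace ((W1 : Matrix (Fin m) (Fin m) ℂ) * A * S⁻¹ *
        (W2 : Matrix (Fin n) (Fin n) ℂ) * G))‖ ≤ t := by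
    intro W1 W2
    rw [htr W1 W2]
    set V1 : Matrix (Fin m) (Fin m) ℂ := (W1 : Matrix (Fin m) (Fin m) ℂ) * U with hV1
    set V2 : Matrix (Fin n) (Fin n) ℂ := T * (W2 : Matrix (Fin n) (Fin n) ℂ) with hV2
    have hV1mem : V1 ∈ Matrix.unitaryGroup (Fin m) ℂ := mul_mem W1.2 hU
    have hV2mem : V2 ∈ Matrix.unitaryGroup (Fin n) ℂ := mul_mem hT W2.2
    have hV1l : V1ᴴ * V1 = 1 := Matrix.mem_unitaryGroup_iff'.mp hV1mem
    have hV1r : V1 * V1ᴴ = 1 := Matrix.mem_unitaryGroup_iff.mp hV1mem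
    have hV2l : V2ᴴ * V2 = 1 := Matrix.mem_unitaryGroup_iff'.mp hV2mem
    have hV2r : V2 * V2ᴴ = 1 := Matrix.mem_unitaryGroup_iff.mp hV2mem
    set w : Fin n → ℝ := fun l => (∑ a ∈ filtn, Complex.normSq (V2 l a)
      + ∑ a ∈ filtn, Complex.normSq (V1 (Fin.castLE hnm a) (Fin.castLE hnm l))) / 2 with hw
    have hw0 : ∀ l, 0 ≤ w l := by
      intro l
      have h1 : (0:ℝ) ≤ ∑ a ∈ filtn, Complex.normSq (V2 l a) :=
        Finset.sum_nonneg fun a _ => Complex.normSq_nonneg _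
      have h2 : (0:ℝ) ≤ ∑ a ∈ filtn, Complex.normSq (V1 (Fin.castLE hnm a) (Fin.castLE hnm l)) :=
        Finset.sum_nonneg fun a _ => Complex.normSq_nonneg _
      simp only [hw]; linarith
    have hw1 : ∀ l, w l ≤ 1 := by
      intro l
      have h1 : ∑ a ∈ filtn, Complex.normSq (V2 l a) ≤ 1 := by
        calc ∑ a ∈ filtn, Complex.normSq (V2 l a)
            ≤ ∑ a : Fin n, Complex.normSq (V2 l a) :=
              Finset.sum_le_sum_of_subset_of_nonneg (Finset.filter_subset _ _)
                (fun a _ _ => Complex.normSq_nonneg _)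
          _ = 1 := row_norm hV2r l
      have h2 : ∑ a ∈ filtn, Complex.normSq (V1 (Fin.castLE hnm a) (Fin.castLE hnm l)) ≤ 1 := by
        calc ∑ a ∈ filtn, Complex.normSq (V1 (Fin.castLE hnm a) (Fin.castLE hnm l))
            ≤ ∑ a : Fin n, Complex.normSq (V1 (Fin.castLE hnm a) (Fin.castLE hnm l)) :=
              Finset.sum_le_sum_of_subset_of_nonneg (Finset.filter_subset _ _)
                (fun a _ _ => Complex.normSq_nonneg _)
          _ ≤ ∑ k : Fin m, Complex.normSq (V1 k (Fin.castLE hnm l)) :=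
              sum_castLE_le hnm (fun k => Complex.normSq (V1 k (Fin.castLE hnm l)))
                (fun j => Complex.normSq_nonneg _)
          _ = 1 := col_norm hV1l _
      simp only [hw]; linarith
    have hws : ∑ l, w l ≤ (r : ℝ) := by
      have hA1 : ∑ l : Fin n, ∑ a ∈ filtn, Complex.normSq (V2 l a) = r := by
        rw [Finset.sum_comm]
        rw [Finset.sum_congr rfl fun a (_ : a ∈ filtn) => col_norm hV2l a]
        rw [Finset.sum_const, nsmul_eq_mul, mul_one, hfiltn, card_filt hr]
      have hA2 : ∑ l : Fin n, ∑ a ∈ filtn,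
          Complex.normSq (V1 (Fin.castLE hnm a) (Fin.castLE hnm l)) ≤ r := by
        rw [Finset.sum_comm]
        calc ∑ a ∈ filtn, ∑ l : Fin n, Complex.normSq (V1 (Fin.castLE hnm a) (Fin.castLE hnm l))
            ≤ ∑ a ∈ filtn, (1:ℝ) := by
              refine Finset.sum_le_sum fun a _ => ?_
              calc ∑ l : Fin n, Complex.normSq (V1 (Fin.castLE hnm a) (Fin.castLE hnm l))
                  ≤ ∑ j : Fin m, Complex.normSq (V1 (Fin.castLE hnm a) j) :=
                    sum_castLE_le hnm (fun j => Complex.normSq (V1 (Fin.castLE hnm a) j))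
                      (fun j => Complex.normSq_nonneg _)
                _ = 1 := row_norm hV1r _
          _ = r := by rw [Finset.sum_const, nsmul_eq_mul, mul_one, hfiltn, card_filt hr]
      have : ∑ l, w l = (∑ l : Fin n, ∑ a ∈ filtn, Complex.normSq (V2 l a)
          + ∑ l : Fin n, ∑ a ∈ filtn,
              Complex.normSq (V1 (Fin.castLE hnm a) (Fin.castLE hnm l))) / 2 := by
        simp only [hw]
        rw [← Finset.sum_div, Finset.sum_add_distrib]
      rw [this]; linarith
    -- per-term bound on the trace
    calc ‖(∑ l : Fin n, (α l : ℂ) * (V2 * G * V1) l (Fin.castLE hnm l))‖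
        ≤ ∑ l : Fin n, ‖((α l : ℂ) * (V2 * G * V1) l (Fin.castLE hnm l))‖ :=
          norm_sum_le _ _
      _ ≤ ∑ l : Fin n, α l * w l := by
          refine Finset.sum_le_sum fun l _ => ?_
          rw [norm_mul, Complex.norm_real, Real.norm_eq_abs, abs_of_nonneg (hα0 l)]
          refine mul_le_mul_of_nonneg_left ?_ (hα0 l)
          rw [hXentry V2 V1 l]
          calc ‖(∑ a ∈ filtn, V2 l a * V1 (Fin.castLE hnm a) (Fin.castLE hnm l))‖
              ≤ ∑ a ∈ filtn, ‖(V2 l a * V1 (Fin.castLE hnm a) (Fin.castLE hnm l))‖ :=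
                norm_sum_le _ _
            _ ≤ ∑ a ∈ filtn, (Complex.normSq (V2 l a)
                  + Complex.normSq (V1 (Fin.castLE hnm a) (Fin.castLE hnm l))) / 2 := by
                refine Finset.sum_le_sum fun a _ => ?_
                rw [norm_mul]
                nlinarith [sq_nonneg (‖(V2 l a)‖
                    - ‖(V1 (Fin.castLE hnm a) (Fin.castLE hnm l))‖),
                  Complex.sq_norm (V2 l a),
                  Complex.sq_norm (V1 (Fin.castLE hnm a) (Fin.castLE hnm l)),
                  norm_nonneg (V2 l a),
                  norm_nonneg (V1 (Fin.castLE hnm a) (Fin.castLE hnm l))]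
            _ = w l := by
                simp only [hw]
                rw [← Finset.sum_div, Finset.sum_add_distrib]
      _ ≤ t := key_ineq α w hα0 hmono hw0 hw1 r hr hws
  -- witness
  have hUl : (star U) * U = 1 := Matrix.mem_unitaryGroup_iff'.mp hU
  have hTr : T * (star T) = 1 := Matrix.mem_unitaryGroup_iff.mp hT
  have witness : ‖(Matrix.trace ((star U) * A * S⁻¹ * (star T) * G))‖ = t := by
    rw [htr (star U) (star T), hTr, hUl]
    have hX1 : ∀ l : Fin n, ((1 : Matrix (Fin n) (Fin n) ℂ) * G * (1 : Matrix (Fin m) (Fin m) ℂ)) l (Fin.castLE hnm l)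
        = if (l : ℕ) < r then 1 else 0 := by
      intro l
      rw [hXentry 1 1 l]
      have hterm : ∀ a ∈ filtn, (1 : Matrix (Fin n) (Fin n) ℂ) l a *
          (1 : Matrix (Fin m) (Fin m) ℂ) (Fin.castLE hnm a) (Fin.castLE hnm l)
          = if l = a then 1 else 0 := by
        intro a _
        by_cases h : l = a
        · subst h; simp [Matrix.one_apply]
        · have : Fin.castLE hnm a ≠ Fin.castLE hnm l := fun hh =>
            h (by simpa [Fin.ext_iff] using (Fin.ext_iff.mp hh).symm)
          simp [Matrix.one_apply, h, this]
      rw [Finset.sum_congr rfl hterm, Finset.sum_ite_eq filtn l (fun _ => (1:ℂ))]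
      simp [hfiltn]
    rw [Finset.sum_congr rfl fun l (_ : l ∈ Finset.univ) => by rw [hX1 l]]
    have : (∑ l : Fin n, (α l : ℂ) * if (l : ℕ) < r then 1 else 0) = ((t : ℝ) : ℂ) := by
      rw [ht, hfiltn, Finset.sum_filter, Complex.ofReal_sum]
      refine Finset.sum_congr rfl fun l _ => ?_
      split_ifs <;> simp
    rw [this, Complex.norm_real, Real.norm_eq_abs, abs_of_nonneg]
    exact Finset.sum_nonneg fun l _ => hα0 l
  -- combine
  have hint : ∀ W1 : Matrix.unitaryGroup (Fin m) ℂ,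
      (⨆ W2 : Matrix.unitaryGroup (Fin n) ℂ,
        ‖(Matrix.trace ((W1 : Matrix (Fin m) (Fin m) ℂ) * A * S⁻¹ *
          (W2 : Matrix (Fin n) (Fin n) ℂ) * G))‖) ≤ t :=
    fun W1 => ciSup_le (bound W1)
  apply le_antisymm
  · exact ciSup_le hint
  · have hUmem : (star U) ∈ Matrix.unitaryGroup (Fin m) ℂ := Unitary.star_mem hU
    have hTmem : (star T) ∈ Matrix.unitaryGroup (Fin n) ℂ := Unitary.star_mem hT
    have hbddout : BddAbove (Set.range (fun W1 : Matrix.unitaryGroup (Fin m) ℂ =>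
        ⨆ W2 : Matrix.unitaryGroup (Fin n) ℂ,
          ‖(Matrix.trace ((W1 : Matrix (Fin m) (Fin m) ℂ) * A * S⁻¹ *
            (W2 : Matrix (Fin n) (Fin n) ℂ) * G))‖)) :=
      ⟨t, Set.forall_mem_range.mpr hint⟩
    have hbddin : BddAbove (Set.range (fun W2 : Matrix.unitaryGroup (Fin n) ℂ =>
        ‖(Matrix.trace ((star U) * A * S⁻¹ *
          (W2 : Matrix (Fin n) (Fin n) ℂ) * G))‖)) :=
      ⟨t, Set.forall_mem_range.mpr (bound ⟨star U, hUmem⟩)⟩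
    have h1 : t ≤ ⨆ W2 : Matrix.unitaryGroup (Fin n) ℂ,
        ‖(Matrix.trace ((star U) * A * S⁻¹ *
          (W2 : Matrix (Fin n) (Fin n) ℂ) * G))‖ := by
      rw [← witness]
      exact le_ciSup hbddin (⟨star T, hTmem⟩ : Matrix.unitaryGroup (Fin n) ℂ)
    calc t ≤ _ := h1
      _ ≤ _ := le_ciSup hbddout (⟨star U, hUmem⟩ : Matrix.unitaryGroup (Fin m) ℂ)

end aux


set_option maxHeartbeats 1000000 in
theorem stmt16
    {m p n : ℕ} (hnm : n ≤ m)
    (A : Matrix (Fin m) (Fin n) ℂ) (B : Matrix (Fin p) (Fin n) ℂ)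
    (hrank : (Matrix.fromRows A B).rank = n)
    (U : Matrix (Fin m) (Fin m) ℂ) (hU : U ∈ Matrix.unitaryGroup (Fin m) ℂ)
    (R : Matrix (Fin n) (Fin n) ℂ) (hR : IsUnit R.det)
    (α : Fin n → ℝ)
    (hα0 : ∀ k, 0 ≤ α k) (hα1 : ∀ k, α k ≤ 1) (hmono : Antitone α)
    (hA : A = U * (Matrix.of fun (k : Fin m) (l : Fin n) =>
        if (k : ℕ) = (l : ℕ) then Complex.ofReal (α l) else 0) * R)
    (hBB : Bᴴ * B = Rᴴ * Matrix.diagonal (fun l => Complex.ofReal (1 - α l ^ 2)) * R)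
    (S : Matrix (Fin n) (Fin n) ℂ) (hS : S.PosDef)
    (hSsq : S * S = Aᴴ * A + Bᴴ * B)
    (i : Fin n) (hi : (i : ℕ) + 1 ≤ n / 2) :
    (α i ^ 2 =
(⨆ Φ : Matrix.unitaryGroup (Fin m) ℂ,
      (Matrix.trace (Aᴴ * (Φ : Matrix (Fin m) (Fin m) ℂ)ᴴ *
        Matrix.diagonal (fun k : Fin m => if (k : ℕ) ≤ (i : ℕ) then (1 : ℂ) else 0) *
        (Φ : Matrix (Fin m) (Fin m) ℂ) * A * (Aᴴ * A + Bᴴ * B)⁻¹)).re) -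
(⨆ Φ : Matrix.unitaryGroup (Fin m) ℂ,
      (Matrix.trace (Aᴴ * (Φ : Matrix (Fin m) (Fin m) ℂ)ᴴ *
        Matrix.diagonal (fun k : Fin m => if (k : ℕ) < (i : ℕ) then (1 : ℂ) else 0) *
        (Φ : Matrix (Fin m) (Fin m) ℂ) * A * (Aᴴ * A + Bᴴ * B)⁻¹)).re)) ∧
    (α i =
(⨆ W1 : Matrix.unitaryGroup (Fin m) ℂ, ⨆ W2 : Matrix.unitaryGroup (Fin n) ℂ,
      ‖(Matrix.trace ((W1 : Matrix (Fin m) (Fin m) ℂ) * A * S⁻¹ *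
        (W2 : Matrix (Fin n) (Fin n) ℂ) *
        Matrix.of (fun (k : Fin n) (l : Fin m) =>
          if (k : ℕ) = (l : ℕ) ∧ (k : ℕ) ≤ (i : ℕ) then (1 : ℂ) else 0)))‖) -
(⨆ W1 : Matrix.unitaryGroup (Fin m) ℂ, ⨆ W2 : Matrix.unitaryGroup (Fin n) ℂ,
      ‖(Matrix.trace ((W1 : Matrix (Fin m) (Fin m) ℂ) * A * S⁻¹ *
        (W2 : Matrix (Fin n) (Fin n) ℂ) *
        Matrix.of (fun (k : Fin n) (l : Fin m) =>
          if (k : ℕ) = (l : ℕ) ∧ (k : ℕ) < (i : ℕ) then (1 : ℂ) else 0)))‖)) := by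
  set E : Matrix (Fin m) (Fin n) ℂ := Matrix.of fun (k : Fin m) (l : Fin n) =>
    if (k : ℕ) = (l : ℕ) then Complex.ofReal (α l) else 0 with hEdef
  have hE : ∀ k l, E k l = if (k : ℕ) = (l : ℕ) then ((α l : ℝ) : ℂ) else 0 := fun k l => rfl
  have hr1 : (i : ℕ) + 1 ≤ n := le_trans hi (Nat.div_le_self n 2)
  have hr0 : (i : ℕ) ≤ n := le_of_lt i.isLt
  -- derived algebraic facts
  have hUl : Uᴴ * U = 1 := by
    have := Matrix.mem_unitaryGroup_iff'.mp hU
    simpa [Matrix.star_eq_conjTranspose] using this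
  have hEE : Eᴴ * E = Matrix.diagonal (fun l => ((α l : ℝ) : ℂ)^2) := by
    ext l1 l2
    simp only [Matrix.mul_apply, Matrix.conjTranspose_apply, hE, Matrix.diagonal_apply]
    rw [show (∑ k : Fin m, star (if (k : ℕ) = (l1 : ℕ) then ((α l1 : ℝ) : ℂ) else 0) *
        (if (k : ℕ) = (l2 : ℕ) then ((α l2 : ℝ) : ℂ) else 0))
      = ∑ k : Fin m, if (k : ℕ) = (l1 : ℕ) then
          ((α l1 : ℝ) : ℂ) * (if (k : ℕ) = (l2 : ℕ) then ((α l2 : ℝ) : ℂ) else 0) else 0 from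
      Finset.sum_congr rfl fun k _ => by
        split_ifs <;> simp [Complex.star_def, Complex.conj_ofReal]]
    rw [sum_ite_coe hnm l1]
    simp only [Fin.coe_castLE]
    by_cases h : l1 = l2
    · subst h; simp [sq]
    · rw [if_neg (fun hh => h (Fin.ext hh)), if_neg h, mul_zero]
  have hAA : Aᴴ * A = Rᴴ * (Matrix.diagonal (fun l => ((α l : ℝ) : ℂ)^2)) * R := by
    rw [hA]
    calc (U * E * R)ᴴ * (U * E * R)
        = Rᴴ * (Eᴴ * ((Uᴴ * U) * (E * R))) := by
          simp only [Matrix.conjTranspose_mul, Matrix.mul_assoc]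
      _ = Rᴴ * (Matrix.diagonal (fun l => ((α l : ℝ) : ℂ)^2)) * R := by
          rw [hUl, Matrix.one_mul]
          rw [show Eᴴ * (E * R) = Matrix.diagonal (fun l => ((α l : ℝ) : ℂ)^2) * R from by
            rw [← Matrix.mul_assoc, hEE]]
          rw [← Matrix.mul_assoc]
  have hM : Aᴴ * A + Bᴴ * B = Rᴴ * R := by
    rw [hAA, hBB, Matrix.mul_assoc, Matrix.mul_assoc, ← Matrix.mul_add, ← Matrix.add_mul]
    rw [Matrix.diagonal_add]
    rw [show (fun l => ((α l : ℝ) : ℂ)^2 + Complex.ofReal (1 - α l ^ 2)) = fun _ => (1:ℂ) from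
      funext fun l => by push_cast; ring]
    rw [Matrix.diagonal_one, Matrix.one_mul]
  have hRRS : Rᴴ * R = S * S := by rw [← hM, hSsq]
  have hSdet : IsUnit S.det := by
    have h1 : IsUnit (S.det * S.det) := by
      rw [← Matrix.det_mul, hSsq, hM, Matrix.det_mul, Matrix.det_conjTranspose]
      exact (hR.star.mul hR)
    exact isUnit_of_mul_isUnit_left h1
  have hSH : Sᴴ = S := hS.isHermitian
  have hT : (R * S⁻¹) ∈ Matrix.unitaryGroup (Fin n) ℂ := by
    rw [Matrix.mem_unitaryGroup_iff']
    have hstar : star (R * S⁻¹) = S⁻¹ * Rᴴ := by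
      rw [Matrix.star_eq_conjTranspose, Matrix.conjTranspose_mul,
        Matrix.conjTranspose_nonsing_inv, hSH]
    rw [hstar]
    calc S⁻¹ * Rᴴ * (R * S⁻¹) = S⁻¹ * (Rᴴ * R) * S⁻¹ := by
          simp only [Matrix.mul_assoc]
      _ = S⁻¹ * (S * S) * S⁻¹ := by rw [hRRS]
      _ = (S⁻¹ * S) * (S * S⁻¹) := by simp only [Matrix.mul_assoc]
      _ = 1 := by
          rw [Matrix.nonsing_inv_mul _ hSdet, Matrix.mul_nonsing_inv _ hSdet, Matrix.one_mul]
  have hC : A * S⁻¹ = U * E * (R * S⁻¹) := by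
    rw [hA]; simp only [Matrix.mul_assoc]
  -- the filter-sum splitting
  have hins : Finset.univ.filter (fun l : Fin n => (l : ℕ) < (i : ℕ) + 1)
      = insert i (Finset.univ.filter (fun l : Fin n => (l : ℕ) < (i : ℕ))) := by
    ext l
    simp only [Finset.mem_filter, Finset.mem_univ, true_and, Finset.mem_insert, Fin.ext_iff]
    omega
  have hnotmem : i ∉ Finset.univ.filter (fun l : Fin n => (l : ℕ) < (i : ℕ)) := by simp
  constructor
  · -- part (i)
    rw [show (fun k : Fin m => if (k : ℕ) ≤ (i : ℕ) then (1 : ℂ) else 0)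
        = (fun k : Fin m => if (k : ℕ) < (i : ℕ) + 1 then (1 : ℂ) else 0) from
      funext fun k => by simp [Nat.lt_succ_iff]]
    rw [sup1 hnm α hα0 hmono U hU E hE R hR A hA (Aᴴ * A + Bᴴ * B) hM
      ((i : ℕ) + 1) hr1]
    rw [sup1 hnm α hα0 hmono U hU E hE R hR A hA (Aᴴ * A + Bᴴ * B) hM
      (i : ℕ) hr0]
    rw [hins, Finset.sum_insert hnotmem]
    ring
  · -- part (ii)
    rw [show (fun (k : Fin n) (l : Fin m) =>
        if (k : ℕ) = (l : ℕ) ∧ (k : ℕ) ≤ (i : ℕ) then (1 : ℂ) else 0)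
        = (fun (k : Fin n) (l : Fin m) =>
        if (k : ℕ) = (l : ℕ) ∧ (k : ℕ) < (i : ℕ) + 1 then (1 : ℂ) else 0) from
      funext fun k => funext fun l => by simp [Nat.lt_succ_iff]]
    rw [sup2 hnm α hα0 hmono U hU E hE (R * S⁻¹) hT A S hC ((i : ℕ) + 1) hr1]
    rw [sup2 hnm α hα0 hmono U hU E hE (R * S⁻¹) hT A S hC (i : ℕ) hr0]
    rw [hins, Finset.sum_insert hnotmem]
    ring
end

section
/- Let m < n and let {A,B} be an (m,p,n)-GMP with GSVD as in the context, with generalized singular values (αᵢ, βᵢ). If m < ⌊n/2⌋, then for every 1 ≤ i ≤ m both formulations hold: αᵢ² = max_{Ψ ∈ 𝕌_m} Re tr(Aᴴ Ψᴴ 𝒬_i Ψ A (AᴴA + BᴴB)^{-1}) − max_{Ψ ∈ 𝕌_m} Re tr(Aᴴ Ψᴴ 𝒬_{i-1} Ψ A (AᴴA + BᴴB)^{-1}) and αᵢ = max_{Π₃ ∈ 𝕌_n, Π₄ ∈ 𝕌_m} |tr(Π₃ (AᴴA + BᴴB)^{-1/2} Aᴴ Π₄ 𝒮_i)| − max_{Π₃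 ∈ 𝕌_n, Π₄ ∈ 𝕌_m} |tr(Π₃ (AᴴA + BᴴB)^{-1/2} Aᴴ Π₄ 𝒮_{i-1})|, and moreover α_{m+1} = ⋯ = α_{⌊n/2⌋} = 0. If instead ⌊n/2⌋ ≤ m, then the same two formulations hold for every 1 ≤ i ≤ ⌊n/2⌋. -/
open Matrix BigOperators
open scoped ComplexOrder

lemma card_filter_lt' {m t : ℕ} (ht : t ≤ m) :
    (Finset.univ.filter (fun j : Fin m => (j:ℕ) < t)).card = t := by
  apply Finset.card_eq_of_bijective (fun i hi => ⟨i, lt_of_lt_of_le hi ht⟩)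
  · intro a ha
    simp only [Finset.mem_filter, Finset.mem_univ, true_and] at ha
    exact ⟨a, ha, Fin.ext rfl⟩
  · intro i hi
    simp [hi]
  · intro i j hi hj hij
    simpa [Fin.ext_iff] using hij

lemma maj_le {m : ℕ} (a c : Fin m → ℝ) (ha0 : ∀ j, 0 ≤ a j)
    (hmono : ∀ j k : Fin m, j ≤ k → a k ≤ a j)
    (hc0 : ∀ j, 0 ≤ c j) (hc1 : ∀ j, c j ≤ 1) (t : ℕ) (ht : t ≤ m)
    (hsum : ∑ j, c j ≤ t) :
    ∑ j, c j * a j ≤ ∑ j ∈ Finset.univ.filter (fun j : Fin m => (j:ℕ) < t), a j := by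
  rcases Nat.eq_zero_or_pos t with rfl | htpos
  · have : ∀ j ∈ Finset.univ, c j = 0 := by
      rw [← Finset.sum_eq_zero_iff_of_nonneg (fun j _ => hc0 j)]
      exact le_antisymm (by simpa using hsum) (Finset.sum_nonneg (fun j _ => hc0 j))
    have h0 : ∑ j, c j * a j = 0 :=
      Finset.sum_eq_zero (fun j hj => by rw [this j hj, zero_mul])
    simp [h0]
  · set p : Fin m := ⟨t - 1, lt_of_lt_of_le (Nat.sub_lt htpos one_pos) ht⟩ with hp
    have key : ∀ j : Fin m, c j * a j ≤
        (if (j:ℕ) < t then a j - a p else 0) + c j * a p := by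
      intro j
      by_cases hj : (j:ℕ) < t
      · simp only [hj, if_pos]
        have hjp : j ≤ p := by
          simp only [Fin.le_def, hp]
          omega
        have h1 : a p ≤ a j := hmono j p hjp
        nlinarith [hc0 j, hc1 j]
      · simp only [hj, if_neg, not_false_iff]
        have hpj : p ≤ j := by
          simp only [Fin.le_def, hp]
          omega
        have h1 : a j ≤ a p := hmono p j hpj
        nlinarith [hc0 j]
    calc ∑ j, c j * a j ≤ ∑ j : Fin m, ((if (j:ℕ) < t then a j - a p else 0) + c j * a p) :=
          Finset.sum_le_sum (fun j _ => key j)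
      _ = (∑ j ∈ Finset.univ.filter (fun j : Fin m => (j:ℕ) < t), (a j - a p))
          + (∑ j : Fin m, c j) * a p := by
          rw [Finset.sum_add_distrib, ← Finset.sum_filter, ← Finset.sum_mul]
      _ ≤ (∑ j ∈ Finset.univ.filter (fun j : Fin m => (j:ℕ) < t), (a j - a p))
          + t * a p := by
          gcongr
          exact ha0 p
      _ = ∑ j ∈ Finset.univ.filter (fun j : Fin m => (j:ℕ) < t), a j := by
          rw [Finset.sum_sub_distrib, Finset.sum_const, card_filter_lt' ht]
          push_cast
          ring

lemma col_sum_one {m : ℕ} (Ψ : Matrix (Fin m) (Fin m) ℂ)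
    (h : Ψ ∈ Matrix.unitaryGroup (Fin m) ℂ) (j : Fin m) :
    ∑ k : Fin m, Complex.normSq (Ψ k j) = 1 := by
  have h1 : (star Ψ * Ψ) j j = 1 := by
    rw [(Matrix.mem_unitaryGroup_iff').mp h]
    simp
  rw [Matrix.mul_apply] at h1
  have h2 : ∑ k : Fin m, ((Complex.normSq (Ψ k j) : ℂ)) = 1 := by
    rw [← h1]
    apply Finset.sum_congr rfl
    intro k _
    rw [star_apply]
    simp [Complex.star_def, ← Complex.normSq_eq_conj_mul_self]
  have := congrArg Complex.re h2
  simpa [Complex.re_sum] using this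

lemma row_sum_one {m : ℕ} (Ψ : Matrix (Fin m) (Fin m) ℂ)
    (h : Ψ ∈ Matrix.unitaryGroup (Fin m) ℂ) (k : Fin m) :
    ∑ j : Fin m, Complex.normSq (Ψ k j) = 1 := by
  have h1 : (Ψ * star Ψ) k k = 1 := by
    rw [(Matrix.mem_unitaryGroup_iff).mp h]
    simp
  rw [Matrix.mul_apply] at h1
  have h2 : ∑ j : Fin m, ((Complex.normSq (Ψ k j) : ℂ)) = 1 := by
    rw [← h1]
    apply Finset.sum_congr rfl
    intro j _
    rw [star_apply, mul_comm]
    simp [Complex.star_def, ← Complex.normSq_eq_conj_mul_self]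
  have := congrArg Complex.re h2
  simpa [Complex.re_sum] using this

lemma partial_sum_le {n m : ℕ} (h : m ≤ n) (f : Fin n → ℝ) (hf : ∀ i, 0 ≤ f i) :
    ∑ b : Fin m, f (Fin.castLE h b) ≤ ∑ l : Fin n, f l := by
  have : ∑ b : Fin m, f (Fin.castLE h b)
      = ∑ l ∈ Finset.univ.map (Fin.castLEEmb h), f l := by
    rw [Finset.sum_map]
    rfl
  rw [this]
  exact Finset.sum_le_sum_of_subset_of_nonneg (Finset.subset_univ _)
    (fun i _ _ => hf i)

lemma iSup_equiv' {ι κ : Type*} (e : ι ≃ κ) (g : κ → ℝ) :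
    (⨆ i, g (e i)) = ⨆ k, g k := by
  rw [iSup, iSup]
  congr 1
  ext y
  constructor
  · rintro ⟨i, rfl⟩
    exact ⟨e i, rfl⟩
  · rintro ⟨k, rfl⟩
    exact ⟨e.symm k, by simp⟩
lemma sigma_conj_sigma {m n : ℕ} (hmn : m ≤ n) (α : Fin n → ℝ)
    (hzero : ∀ k : Fin n, m ≤ (k : ℕ) → α k = 0) :
    (Matrix.of fun (k : Fin m) (l : Fin n) =>
        if (k : ℕ) = (l : ℕ) then Complex.ofReal (α l) else 0)ᴴ *
      (Matrix.of fun (k : Fin m) (l : Fin n) =>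
        if (k : ℕ) = (l : ℕ) then Complex.ofReal (α l) else 0)
    = Matrix.diagonal (fun l : Fin n => ((α l : ℂ))^2) := by
  ext l l'
  rw [Matrix.mul_apply, Matrix.diagonal_apply]
  simp only [Matrix.conjTranspose_apply, Matrix.of_apply]
  by_cases hl : (l : ℕ) < m
  · rw [Finset.sum_eq_single (⟨(l:ℕ), hl⟩ : Fin m)]
    · have hcond : (((⟨(l:ℕ), hl⟩ : Fin m)) : ℕ) = (l:ℕ) := rfl
      rw [if_pos hcond, Complex.star_def, Complex.conj_ofReal]
      by_cases he : l = l'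
      · subst he
        rw [if_pos rfl, if_pos rfl, pow_two]
      · have h2 : ¬((l:ℕ) = (l':ℕ)) := fun hc => he (Fin.ext hc)
        rw [if_neg h2, if_neg he, mul_zero]
    · intro k _ hk
      have : ¬((k:ℕ) = (l:ℕ)) := by
        intro hc
        exact hk (Fin.ext hc)
      rw [if_neg this]
      simp
    · simp
  · have hz : α l = 0 := hzero l (le_of_not_gt hl)
    have h0 : ∀ k : Fin m, star (if (k:ℕ) = (l:ℕ) then Complex.ofReal (α l) else 0) *
        (if (k:ℕ) = (l':ℕ) then Complex.ofReal (α l') else 0) = 0 := by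
      intro k
      by_cases hk : (k:ℕ) = (l:ℕ)
      · rw [if_pos hk, hz]
        simp
      · rw [if_neg hk]
        simp
    rw [Finset.sum_eq_zero (fun k _ => h0 k)]
    by_cases he : l = l'
    · rw [if_pos he, hz]
      simp
    · rw [if_neg he]

lemma sigma_sigma_conj {m n : ℕ} (hmn : m ≤ n) (α : Fin n → ℝ) :
    (Matrix.of fun (k : Fin m) (l : Fin n) =>
        if (k : ℕ) = (l : ℕ) then Complex.ofReal (α l) else 0) *
      (Matrix.of fun (k : Fin m) (l : Fin n) =>
        if (k : ℕ) = (l : ℕ) then Complex.ofReal (α l) else 0)ᴴ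
    = Matrix.diagonal (fun j : Fin m => ((α (Fin.castLE hmn j) : ℂ))^2) := by
  ext k k'
  rw [Matrix.mul_apply, Matrix.diagonal_apply]
  simp only [Matrix.conjTranspose_apply, Matrix.of_apply]
  rw [Finset.sum_eq_single (Fin.castLE hmn k)]
  · have hk : (k:ℕ) = ((Fin.castLE hmn k : Fin n) : ℕ) := rfl
    rw [if_pos hk]
    by_cases he : k' = k
    · subst he
      rw [if_pos hk]
      rw [Complex.star_def, Complex.conj_ofReal]
      simp [pow_two]
    · have h1 : ¬((k':ℕ) = ((Fin.castLE hmn k : Fin n) : ℕ)) := by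
        intro hc
        exact he (Fin.ext hc)
      rw [if_neg h1, if_neg (fun hc => he hc.symm), star_zero, mul_zero]
  · intro l _ hl
    have : ¬((k:ℕ) = (l:ℕ)) := by
      intro hc
      exact hl (Fin.ext hc.symm)
    rw [if_neg this, zero_mul]
  · simp
lemma trace_diag_form {m : ℕ} (dm : Fin m → ℝ) (t : ℕ)
    (Ψ : Matrix (Fin m) (Fin m) ℂ) :
    (Matrix.trace (Matrix.diagonal (fun j : Fin m => (dm j : ℂ)) *
      (star Ψ * (Matrix.diagonal (fun k : Fin m => if (k:ℕ) < t then (1:ℂ) else 0) * Ψ)))).re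
    = ∑ k : Fin m, ∑ j : Fin m, (if (k:ℕ) < t then (1:ℝ) else 0) *
        (dm j * Complex.normSq (Ψ k j)) := by
  have e1 : Matrix.trace (Matrix.diagonal (fun j : Fin m => (dm j : ℂ)) *
      (star Ψ * (Matrix.diagonal (fun k : Fin m => if (k:ℕ) < t then (1:ℂ) else 0) * Ψ)))
      = ∑ j : Fin m, ∑ k : Fin m, (dm j : ℂ) *
        (star (Ψ k j) * ((if (k:ℕ) < t then (1:ℂ) else 0) * Ψ k j)) := by
    rw [Matrix.trace]
    apply Finset.sum_congr rfl
    intro j _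
    rw [Matrix.diag]
    rw [Matrix.diagonal_mul, Matrix.mul_apply, Finset.mul_sum]
    apply Finset.sum_congr rfl
    intro k _
    rw [Matrix.diagonal_mul, Matrix.star_apply]
  rw [e1]
  rw [Complex.re_sum]
  rw [Finset.sum_comm]
  apply Finset.sum_congr rfl
  intro k _
  rw [Complex.re_sum]
  apply Finset.sum_congr rfl
  intro j _
  have hconj : star (Ψ j k) * Ψ j k = (Complex.normSq (Ψ j k) : ℂ) := by
    simp [Complex.star_def, ← Complex.normSq_eq_conj_mul_self]
  by_cases hj : (j:ℕ) < t
  · rw [if_pos hj, if_pos hj, one_mul, one_mul, mul_comm (star (Ψ j k)) (Ψ j k),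
      mul_comm (Ψ j k) (star (Ψ j k)), hconj, ← Complex.ofReal_mul, Complex.ofReal_re]
  · rw [if_neg hj, if_neg hj]
    simp
lemma trace_two_form {m n : ℕ} (h : m ≤ n) (α : Fin n → ℝ) (t : ℕ)
    (P : Matrix (Fin n) (Fin n) ℂ) (Q : Matrix (Fin m) (Fin m) ℂ) :
    Matrix.trace ((Matrix.of (fun (k : Fin m) (l : Fin n) =>
        if (k : ℕ) = (l : ℕ) ∧ (k : ℕ) < t then (1:ℂ) else 0)) *
      (P * (Matrix.of fun (k : Fin m) (l : Fin n) =>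
        if (k : ℕ) = (l : ℕ) then Complex.ofReal (α l) else 0)ᴴ * Q))
    = ∑ b : Fin m, ∑ c : Fin m,
        if (b:ℕ) < t then ((α (Fin.castLE h c) : ℂ)) *
          P (Fin.castLE h b) (Fin.castLE h c) * Q c b else 0 := by
  have hPS : ∀ (l : Fin n) (c : Fin m),
      (P * (Matrix.of fun (k : Fin m) (l : Fin n) =>
        if (k : ℕ) = (l : ℕ) then Complex.ofReal (α l) else 0)ᴴ) l c
      = P l (Fin.castLE h c) * (α (Fin.castLE h c) : ℂ) := by
    intro l c
    rw [Matrix.mul_apply]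
    rw [Finset.sum_eq_single (Fin.castLE h c)]
    · simp only [Matrix.conjTranspose_apply, Matrix.of_apply]
      rw [Fin.coe_castLE, if_pos rfl]
      rw [Complex.star_def, Complex.conj_ofReal]
    · intro l' _ hl'
      simp only [Matrix.conjTranspose_apply, Matrix.of_apply]
      have : ¬((c:ℕ) = (l':ℕ)) := fun hc => hl' (Fin.ext hc.symm)
      rw [if_neg this, star_zero, mul_zero]
    · simp
  rw [Matrix.trace]
  apply Finset.sum_congr rfl
  intro b _
  rw [Matrix.diag, Matrix.mul_apply]
  by_cases hb : (b:ℕ) < t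
  · rw [Finset.sum_eq_single (Fin.castLE h b)]
    · rw [Matrix.of_apply]
      rw [Fin.coe_castLE, if_pos ⟨rfl, hb⟩, one_mul]
      rw [Matrix.mul_apply]
      apply Finset.sum_congr rfl
      intro c _
      rw [hPS, if_pos hb]
      ring
    · intro l _ hl
      rw [Matrix.of_apply]
      have : ¬((b:ℕ) = (l:ℕ) ∧ (b:ℕ) < t) := by
        rintro ⟨h1, -⟩
        exact hl (Fin.ext h1.symm)
      rw [if_neg this, zero_mul]
    · simp
  · rw [Finset.sum_eq_zero, Finset.sum_eq_zero]
    · intro c _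
      rw [if_neg (fun hc : (b:ℕ) < t => hb hc)]
    · intro l _
      rw [Matrix.of_apply]
      have : ¬((b:ℕ) = (l:ℕ) ∧ (b:ℕ) < t) := fun hc => hb hc.2
      rw [if_neg this, zero_mul]
lemma sup_one {m : ℕ} (d : Fin m → ℝ) (hd0 : ∀ j, 0 ≤ d j)
    (hmono : ∀ j k : Fin m, j ≤ k → d k ≤ d j) (t : ℕ) (ht : t ≤ m) :
    (⨆ Ψ : Matrix.unitaryGroup (Fin m) ℂ,
      ∑ k : Fin m, ∑ j : Fin m, (if (k:ℕ) < t then (1:ℝ) else 0) *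
        (d j * Complex.normSq ((Ψ : Matrix (Fin m) (Fin m) ℂ) k j)))
    = ∑ j ∈ Finset.univ.filter (fun j : Fin m => (j:ℕ) < t), d j := by
  set tgt := ∑ j ∈ Finset.univ.filter (fun j : Fin m => (j:ℕ) < t), d j with htgt
  have hbound : ∀ Ψ : Matrix.unitaryGroup (Fin m) ℂ,
      (∑ k : Fin m, ∑ j : Fin m, (if (k:ℕ) < t then (1:ℝ) else 0) *
        (d j * Complex.normSq ((Ψ : Matrix (Fin m) (Fin m) ℂ) k j))) ≤ tgt := by
    rintro ⟨Ψ, hΨ⟩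
    simp only []
    set c : Fin m → ℝ := fun j => ∑ k : Fin m,
      (if (k:ℕ) < t then (1:ℝ) else 0) * Complex.normSq (Ψ k j) with hc
    have hrw : (∑ k : Fin m, ∑ j : Fin m, (if (k:ℕ) < t then (1:ℝ) else 0) *
        (d j * Complex.normSq (Ψ k j))) = ∑ j : Fin m, c j * d j := by
      rw [Finset.sum_comm]
      apply Finset.sum_congr rfl
      intro j _
      rw [hc, Finset.sum_mul]
      apply Finset.sum_congr rfl
      intro k _
      ring
    rw [hrw]
    apply maj_le d c hd0 hmono
    · intro j
      apply Finset.sum_nonneg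
      intro k _
      have := Complex.normSq_nonneg (Ψ k j)
      by_cases hk : (k:ℕ) < t <;> simp [hk] <;> positivity
    · intro j
      calc c j ≤ ∑ k : Fin m, Complex.normSq (Ψ k j) := by
            apply Finset.sum_le_sum
            intro k _
            by_cases hk : (k:ℕ) < t <;> simp [hk, Complex.normSq_nonneg]
        _ = 1 := col_sum_one Ψ hΨ j
    · exact ht
    · have : ∑ j : Fin m, c j = ∑ k : Fin m, (if (k:ℕ) < t then (1:ℝ) else 0) := by
        rw [hc, Finset.sum_comm]
        apply Finset.sum_congr rfl
        intro k _
        rw [← Finset.mul_sum, row_sum_one Ψ hΨ k, mul_one]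
      rw [this, Finset.sum_ite, Finset.sum_const, Finset.sum_const]
      simp only [nsmul_eq_mul, mul_one, mul_zero, smul_zero, add_zero]
      rw [card_filter_lt' ht]
  apply le_antisymm
  · exact ciSup_le hbound
  · have hmem : (1 : Matrix (Fin m) (Fin m) ℂ) ∈ Matrix.unitaryGroup (Fin m) ℂ := by
      rw [Matrix.mem_unitaryGroup_iff]; simp
    have hle := le_ciSup (f := fun Ψ : Matrix.unitaryGroup (Fin m) ℂ =>
      ∑ k : Fin m, ∑ j : Fin m, (if (k:ℕ) < t then (1:ℝ) else 0) *
        (d j * Complex.normSq ((Ψ : Matrix (Fin m) (Fin m) ℂ) k j)))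
      ⟨tgt, Set.forall_mem_range.mpr hbound⟩ (⟨1, hmem⟩ : Matrix.unitaryGroup (Fin m) ℂ)
    refine le_trans ?_ hle
    have : ∀ k j : Fin m, Complex.normSq ((1 : Matrix (Fin m) (Fin m) ℂ) k j)
        = if k = j then 1 else 0 := by
      intro k j
      by_cases h : k = j <;> simp [Matrix.one_apply, h]
    calc tgt = ∑ k : Fin m, (if (k:ℕ) < t then (1:ℝ) else 0) * d k := by
          rw [htgt, Finset.sum_filter]
          apply Finset.sum_congr rfl
          intro k _
          by_cases hk : (k:ℕ) < t <;> simp [hk]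
      _ ≤ _ := by
          apply le_of_eq
          apply Finset.sum_congr rfl
          intro k _
          rw [Finset.sum_eq_single k]
          · simp [this]
          · intro j _ hj
            simp [this, (Ne.symm hj)]
          · simp

lemma sup_two {m n : ℕ} (h : m ≤ n) (a : Fin n → ℝ) (ha0 : ∀ j, 0 ≤ a j)
    (hmono : ∀ j k : Fin n, j ≤ k → a k ≤ a j) (t : ℕ) (ht : t ≤ m) :
    (⨆ P : Matrix.unitaryGroup (Fin n) ℂ, ⨆ Q : Matrix.unitaryGroup (Fin m) ℂ,
      Norm.norm (∑ b : Fin m, ∑ c : Fin m,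
        if (b:ℕ) < t then ((a (Fin.castLE h c) : ℂ)) *
          (P : Matrix (Fin n) (Fin n) ℂ) (Fin.castLE h b) (Fin.castLE h c) *
          (Q : Matrix (Fin m) (Fin m) ℂ) c b else 0))
    = ∑ c ∈ Finset.univ.filter (fun c : Fin m => (c:ℕ) < t), a (Fin.castLE h c) := by
  set tgt := ∑ c ∈ Finset.univ.filter (fun c : Fin m => (c:ℕ) < t), a (Fin.castLE h c)
    with htgt
  set F : Matrix.unitaryGroup (Fin n) ℂ → Matrix.unitaryGroup (Fin m) ℂ → ℝ :=
    fun P Q => Norm.norm (∑ b : Fin m, ∑ c : Fin m,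
        if (b:ℕ) < t then ((a (Fin.castLE h c) : ℂ)) *
          (P : Matrix (Fin n) (Fin n) ℂ) (Fin.castLE h b) (Fin.castLE h c) *
          (Q : Matrix (Fin m) (Fin m) ℂ) c b else 0) with hF
  have hbound : ∀ P Q, F P Q ≤ tgt := by
    rintro ⟨P, hP⟩ ⟨Q, hQ⟩
    set cc : Fin m → ℝ := fun c => ∑ b : Fin m,
      (if (b:ℕ) < t then (1:ℝ) else 0) *
        (Norm.norm (P (Fin.castLE h b) (Fin.castLE h c)) * Norm.norm (Q c b)) with hcc
    -- partial norm facts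
    have hPcol : ∀ c : Fin m, ∑ b : Fin m,
        Complex.normSq (P (Fin.castLE h b) (Fin.castLE h c)) ≤ 1 := by
      intro c
      have := partial_sum_le h (fun l => Complex.normSq (P l (Fin.castLE h c)))
        (fun i => Complex.normSq_nonneg _)
      calc _ ≤ ∑ l : Fin n, Complex.normSq (P l (Fin.castLE h c)) := this
        _ = 1 := col_sum_one P hP _
    have hProw : ∀ b : Fin m, ∑ c : Fin m,
        Complex.normSq (P (Fin.castLE h b) (Fin.castLE h c)) ≤ 1 := by
      intro b
      have := partial_sum_le h (fun l => Complex.normSq (P (Fin.castLE h b) l))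
        (fun i => Complex.normSq_nonneg _)
      calc _ ≤ ∑ l : Fin n, Complex.normSq (P (Fin.castLE h b) l) := this
        _ = 1 := row_sum_one P hP _
    have hQrow : ∀ c : Fin m, ∑ b : Fin m, Complex.normSq (Q c b) = 1 :=
      row_sum_one Q hQ
    have hQcol : ∀ b : Fin m, ∑ c : Fin m, Complex.normSq (Q c b) = 1 :=
      col_sum_one Q hQ
    have habs : ∀ (x y : ℂ), Norm.norm x * Norm.norm y ≤
        (Complex.normSq x + Complex.normSq y) / 2 := by
      intro x y
      have h2 := two_mul_le_add_sq (Norm.norm x) (Norm.norm y)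
      rw [Complex.sq_norm, Complex.sq_norm] at h2
      linarith
    have step1 : F ⟨P, hP⟩ ⟨Q, hQ⟩ ≤ ∑ c : Fin m, cc c * (a (Fin.castLE h c)) := by
      rw [hF]
      simp only []
      calc Norm.norm (∑ b : Fin m, ∑ c : Fin m,
            if (b:ℕ) < t then ((a (Fin.castLE h c) : ℂ)) *
              P (Fin.castLE h b) (Fin.castLE h c) * Q c b else 0)
          ≤ ∑ b : Fin m, Norm.norm (∑ c : Fin m,
            if (b:ℕ) < t then ((a (Fin.castLE h c) : ℂ)) *
              P (Fin.castLE h b) (Fin.castLE h c) * Q c b else 0) :=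
            norm_sum_le _ _
        _ ≤ ∑ b : Fin m, ∑ c : Fin m, Norm.norm
            (if (b:ℕ) < t then ((a (Fin.castLE h c) : ℂ)) *
              P (Fin.castLE h b) (Fin.castLE h c) * Q c b else 0) :=
            Finset.sum_le_sum (fun b _ => norm_sum_le _ _)
        _ = ∑ c : Fin m, cc c * (a (Fin.castLE h c)) := by
            rw [Finset.sum_comm]
            apply Finset.sum_congr rfl
            intro c _
            rw [hcc]
            simp only []
            rw [Finset.sum_mul]
            apply Finset.sum_congr rfl
            intro b _
            by_cases hb : (b:ℕ) < t
            · simp only [hb, if_pos, one_mul]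
              rw [norm_mul, norm_mul, Complex.norm_real, Real.norm_eq_abs,
                abs_of_nonneg (ha0 _)]
              ring
            · rw [if_neg hb, if_neg hb, norm_zero, zero_mul]
              exact (zero_mul _).symm
    refine le_trans step1 ?_
    apply maj_le (fun c => a (Fin.castLE h c)) cc (fun c => ha0 _)
    · intro j k hjk
      apply hmono
      simp only [Fin.le_def, Fin.coe_castLE]
      exact hjk
    · intro c
      apply Finset.sum_nonneg
      intro b _
      have h1 := norm_nonneg (P (Fin.castLE h b) (Fin.castLE h c))
      have h2 := norm_nonneg (Q c b)
      by_cases hb : (b:ℕ) < t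
      · rw [if_pos hb, one_mul]
        exact mul_nonneg h1 h2
      · rw [if_neg hb, zero_mul]
    · intro c
      calc cc c ≤ ∑ b : Fin m, (Complex.normSq (P (Fin.castLE h b) (Fin.castLE h c))
            + Complex.normSq (Q c b)) / 2 := by
            apply Finset.sum_le_sum
            intro b _
            by_cases hb : (b:ℕ) < t
            · simp only [hb, if_pos, one_mul]
              exact habs _ _
            · rw [if_neg hb, zero_mul]
              have n1 := Complex.normSq_nonneg (P (Fin.castLE h b) (Fin.castLE h c))
              have n2 := Complex.normSq_nonneg (Q c b)
              linarith
        _ = ((∑ b : Fin m, Complex.normSq (P (Fin.castLE h b) (Fin.castLE h c)))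
            + ∑ b : Fin m, Complex.normSq (Q c b)) / 2 := by
            rw [← Finset.sum_add_distrib, ← Finset.sum_div]
        _ ≤ (1 + 1) / 2 := by
            have h1 := hPcol c
            have h2 := (hQrow c).le
            linarith
        _ = 1 := by norm_num
    · exact ht
    · calc ∑ c : Fin m, cc c
          = ∑ b : Fin m, (if (b:ℕ) < t then (1:ℝ) else 0) *
            ∑ c : Fin m, (Norm.norm (P (Fin.castLE h b) (Fin.castLE h c)) *
              Norm.norm (Q c b)) := by
            rw [hcc, Finset.sum_comm]
            apply Finset.sum_congr rfl
            intro b _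
            rw [Finset.mul_sum]
        _ ≤ ∑ b : Fin m, (if (b:ℕ) < t then (1:ℝ) else 0) * 1 := by
            apply Finset.sum_le_sum
            intro b _
            by_cases hb : (b:ℕ) < t
            · simp only [hb, if_pos, one_mul]
              calc ∑ c : Fin m, (Norm.norm (P (Fin.castLE h b) (Fin.castLE h c)) *
                  Norm.norm (Q c b))
                  ≤ ∑ c : Fin m, (Complex.normSq (P (Fin.castLE h b) (Fin.castLE h c))
                    + Complex.normSq (Q c b)) / 2 :=
                    Finset.sum_le_sum (fun c _ => habs _ _)
                _ = ((∑ c : Fin m, Complex.normSq (P (Fin.castLE h b) (Fin.castLE h c)))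
                    + ∑ c : Fin m, Complex.normSq (Q c b)) / 2 := by
                    rw [← Finset.sum_add_distrib, ← Finset.sum_div]
                _ ≤ (1 + 1) / 2 := by
                    have h1 := hProw b
                    have h2 := (hQcol b).le
                    linarith
                _ = 1 := by norm_num
            · rw [if_neg hb, zero_mul, zero_mul]
        _ ≤ t := by
            simp only [mul_one]
            rw [Finset.sum_ite, Finset.sum_const, Finset.sum_const]
            simp only [smul_eq_mul, mul_one, smul_zero, add_zero]
            rw [card_filter_lt' ht]
            simp
  have h1mem : ∀ k : ℕ, (1 : Matrix (Fin k) (Fin k) ℂ) ∈ Matrix.unitaryGroup (Fin k) ℂ := by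
    intro k
    rw [Matrix.mem_unitaryGroup_iff]; simp
  have hval : F ⟨1, h1mem n⟩ ⟨1, h1mem m⟩ = tgt := by
    rw [hF]
    simp only []
    have : (∑ b : Fin m, ∑ c : Fin m,
        if (b:ℕ) < t then ((a (Fin.castLE h c) : ℂ)) *
          (1 : Matrix (Fin n) (Fin n) ℂ) (Fin.castLE h b) (Fin.castLE h c) *
          (1 : Matrix (Fin m) (Fin m) ℂ) c b else 0) = ((tgt : ℝ) : ℂ) := by
      rw [htgt]
      push_cast
      rw [Finset.sum_filter]
      apply Finset.sum_congr rfl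
      intro b _
      rw [Finset.sum_eq_single b]
      · by_cases hb : (b:ℕ) < t <;> simp [hb, Matrix.one_apply]
      · intro c _ hcb
        have h1 : (1 : Matrix (Fin m) (Fin m) ℂ) c b = 0 := by
          simp [Matrix.one_apply, hcb]
        simp [h1]
      · simp
    rw [this, Complex.norm_real, Real.norm_eq_abs, abs_of_nonneg]
    rw [htgt]
    apply Finset.sum_nonneg
    intro c _
    exact ha0 _
  apply le_antisymm
  · exact ciSup_le (fun P => ciSup_le (fun Q => hbound P Q))
  · have hbddQ : ∀ P, BddAbove (Set.range (fun Q => F P Q)) :=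
      fun P => ⟨tgt, Set.forall_mem_range.mpr (hbound P)⟩
    have hbddP : BddAbove (Set.range (fun P => ⨆ Q, F P Q)) :=
      ⟨tgt, Set.forall_mem_range.mpr (fun P => ciSup_le (hbound P))⟩
    calc tgt = F ⟨1, h1mem n⟩ ⟨1, h1mem m⟩ := hval.symm
      _ ≤ ⨆ Q, F ⟨1, h1mem n⟩ Q := le_ciSup (hbddQ _) _
      _ ≤ ⨆ P, ⨆ Q, F P Q := le_ciSup hbddP _

theorem stmt17
    {m p n : ℕ} (hmn : m < n)
    (A : Matrix (Fin m) (Fin n) ℂ) (B : Matrix (Fin p) (Fin n) ℂ)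
    (hrank : (Matrix.fromRows A B).rank = n)
    (U : Matrix (Fin m) (Fin m) ℂ) (hU : U ∈ Matrix.unitaryGroup (Fin m) ℂ)
    (R : Matrix (Fin n) (Fin n) ℂ) (hR : IsUnit R.det)
    (α : Fin n → ℝ)
    (hα0 : ∀ k, 0 ≤ α k) (hα1 : ∀ k, α k ≤ 1) (hmono : Antitone α)
    (hzero : ∀ k : Fin n, m ≤ (k : ℕ) → α k = 0)
    (hA : A = U * (Matrix.of fun (k : Fin m) (l : Fin n) =>
        if (k : ℕ) = (l : ℕ) then Complex.ofReal (α l) else 0) * R)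
    (hBB : Bᴴ * B = Rᴴ * Matrix.diagonal (fun l => Complex.ofReal (1 - α l ^ 2)) * R)
    (S : Matrix (Fin n) (Fin n) ℂ) (hS : S.PosDef)
    (hSsq : S * S = Aᴴ * A + Bᴴ * B)
 :
    ((m < n / 2 →
      (∀ i : Fin n, (i : ℕ) < m →
        (α i ^ 2 =
(⨆ Φ : Matrix.unitaryGroup (Fin m) ℂ,
      (Matrix.trace (Aᴴ * (Φ : Matrix (Fin m) (Fin m) ℂ)ᴴ *
        Matrix.diagonal (fun k : Fin m => if (k : ℕ) ≤ (i : ℕ) then (1 : ℂ) else 0) *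
        (Φ : Matrix (Fin m) (Fin m) ℂ) * A * (Aᴴ * A + Bᴴ * B)⁻¹)).re) -
(⨆ Φ : Matrix.unitaryGroup (Fin m) ℂ,
      (Matrix.trace (Aᴴ * (Φ : Matrix (Fin m) (Fin m) ℂ)ᴴ *
        Matrix.diagonal (fun k : Fin m => if (k : ℕ) < (i : ℕ) then (1 : ℂ) else 0) *
        (Φ : Matrix (Fin m) (Fin m) ℂ) * A * (Aᴴ * A + Bᴴ * B)⁻¹)).re)) ∧
        (α i =
(⨆ W3 : Matrix.unitaryGroup (Fin n) ℂ, ⨆ W4 : Matrix.unitaryGroup (Fin m) ℂ,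
      Norm.norm (Matrix.trace ((W3 : Matrix (Fin n) (Fin n) ℂ) * S⁻¹ * Aᴴ *
        (W4 : Matrix (Fin m) (Fin m) ℂ) *
        Matrix.of (fun (k : Fin m) (l : Fin n) =>
          if (k : ℕ) = (l : ℕ) ∧ (k : ℕ) ≤ (i : ℕ) then (1 : ℂ) else 0)))) -
(⨆ W3 : Matrix.unitaryGroup (Fin n) ℂ, ⨆ W4 : Matrix.unitaryGroup (Fin m) ℂ,
      Norm.norm (Matrix.trace ((W3 : Matrix (Fin n) (Fin n) ℂ) * S⁻¹ * Aᴴ *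
        (W4 : Matrix (Fin m) (Fin m) ℂ) *
        Matrix.of (fun (k : Fin m) (l : Fin n) =>
          if (k : ℕ) = (l : ℕ) ∧ (k : ℕ) < (i : ℕ) then (1 : ℂ) else 0)))))) ∧
      (∀ k : Fin n, m ≤ (k : ℕ) → (k : ℕ) < n / 2 → α k = 0)) ∧
     (n / 2 ≤ m →
      ∀ i : Fin n, (i : ℕ) + 1 ≤ n / 2 →
        (α i ^ 2 =
(⨆ Φ : Matrix.unitaryGroup (Fin m) ℂ,
      (Matrix.trace (Aᴴ * (Φ : Matrix (Fin m) (Fin m) ℂ)ᴴ *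
        Matrix.diagonal (fun k : Fin m => if (k : ℕ) ≤ (i : ℕ) then (1 : ℂ) else 0) *
        (Φ : Matrix (Fin m) (Fin m) ℂ) * A * (Aᴴ * A + Bᴴ * B)⁻¹)).re) -
(⨆ Φ : Matrix.unitaryGroup (Fin m) ℂ,
      (Matrix.trace (Aᴴ * (Φ : Matrix (Fin m) (Fin m) ℂ)ᴴ *
        Matrix.diagonal (fun k : Fin m => if (k : ℕ) < (i : ℕ) then (1 : ℂ) else 0) *
        (Φ : Matrix (Fin m) (Fin m) ℂ) * A * (Aᴴ * A + Bᴴ * B)⁻¹)).re)) ∧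
        (α i =
(⨆ W3 : Matrix.unitaryGroup (Fin n) ℂ, ⨆ W4 : Matrix.unitaryGroup (Fin m) ℂ,
      Norm.norm (Matrix.trace ((W3 : Matrix (Fin n) (Fin n) ℂ) * S⁻¹ * Aᴴ *
        (W4 : Matrix (Fin m) (Fin m) ℂ) *
        Matrix.of (fun (k : Fin m) (l : Fin n) =>
          if (k : ℕ) = (l : ℕ) ∧ (k : ℕ) ≤ (i : ℕ) then (1 : ℂ) else 0)))) -
(⨆ W3 : Matrix.unitaryGroup (Fin n) ℂ, ⨆ W4 : Matrix.unitaryGroup (Fin m) ℂ,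
      Norm.norm (Matrix.trace ((W3 : Matrix (Fin n) (Fin n) ℂ) * S⁻¹ * Aᴴ *
        (W4 : Matrix (Fin m) (Fin m) ℂ) *
        Matrix.of (fun (k : Fin m) (l : Fin n) =>
          if (k : ℕ) = (l : ℕ) ∧ (k : ℕ) < (i : ℕ) then (1 : ℂ) else 0))))))) := by
  have hmn' : m ≤ n := hmn.le
  have hRH : IsUnit (Rᴴ).det := by
    rw [Matrix.det_conjTranspose]
    exact hR.star
  have hUU : (star U) * U = 1 := (Matrix.mem_unitaryGroup_iff').mp hU
  have hAH : Aᴴ = Rᴴ * ((Matrix.of fun (k : Fin m) (l : Fin n) =>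
      if (k : ℕ) = (l : ℕ) then Complex.ofReal (α l) else 0)ᴴ * Uᴴ) := by
    rw [hA, Matrix.conjTranspose_mul, Matrix.conjTranspose_mul]
  have hUcan : ∀ X : Matrix (Fin m) (Fin n) ℂ, Uᴴ * (U * X) = X := by
    intro X
    rw [← Matrix.mul_assoc, ← Matrix.star_eq_conjTranspose, hUU, Matrix.one_mul]
  have hAA : Aᴴ * A = Rᴴ * Matrix.diagonal (fun l : Fin n => ((α l : ℂ))^2) * R := by
    rw [hAH, hA]
    simp only [Matrix.mul_assoc]
    rw [hUcan]
    rw [← Matrix.mul_assoc (Matrix.of fun (k : Fin m) (l : Fin n) =>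
      if (k : ℕ) = (l : ℕ) then Complex.ofReal (α l) else 0)ᴴ]
    rw [sigma_conj_sigma hmn' α hzero]
  have hM : Aᴴ * A + Bᴴ * B = Rᴴ * R := by
    rw [hAA, hBB]
    rw [Matrix.mul_assoc, Matrix.mul_assoc, ← Matrix.mul_add]
    rw [← Matrix.add_mul, Matrix.diagonal_add]
    have : (fun l : Fin n => ((α l : ℂ))^2 + Complex.ofReal (1 - α l ^ 2))
        = fun _ : Fin n => (1 : ℂ) := by
      funext l
      push_cast
      ring
    rw [this, Matrix.diagonal_one, Matrix.one_mul]
  have hMinv : (Aᴴ * A + Bᴴ * B)⁻¹ = R⁻¹ * (Rᴴ)⁻¹ := by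
    rw [hM, Matrix.mul_inv_rev]
  have hRR : ∀ X : Matrix (Fin n) (Fin n) ℂ, R * (R⁻¹ * X) = X := by
    intro X
    rw [← Matrix.mul_assoc, Matrix.mul_nonsing_inv _ hR, Matrix.one_mul]
  -- notation shortcuts (explicit everywhere)
  -- PART 1 KEY
  have htrace1 : ∀ (t : ℕ) (Φ : Matrix (Fin m) (Fin m) ℂ),
      Matrix.trace (Aᴴ * Φᴴ *
        Matrix.diagonal (fun k : Fin m => if (k : ℕ) < t then (1 : ℂ) else 0) *
        Φ * A * (Aᴴ * A + Bᴴ * B)⁻¹)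
      = Matrix.trace (Matrix.diagonal
          (fun j : Fin m => ((α (Fin.castLE hmn' j) : ℂ))^2) *
        (Uᴴ * (Φᴴ * (Matrix.diagonal (fun k : Fin m => if (k : ℕ) < t then (1 : ℂ) else 0) *
          (Φ * U))))) := by
    intro t Φ
    have hid1 : Aᴴ * Φᴴ *
        Matrix.diagonal (fun k : Fin m => if (k : ℕ) < t then (1 : ℂ) else 0) *
        Φ * A * (Aᴴ * A + Bᴴ * B)⁻¹
        = Rᴴ * ((Matrix.of fun (k : Fin m) (l : Fin n) =>
            if (k : ℕ) = (l : ℕ) then Complex.ofReal (α l) else 0)ᴴ *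
          (Uᴴ * (Φᴴ * (Matrix.diagonal (fun k : Fin m => if (k : ℕ) < t then (1 : ℂ) else 0) *
          (Φ * (U * ((Matrix.of fun (k : Fin m) (l : Fin n) =>
            if (k : ℕ) = (l : ℕ) then Complex.ofReal (α l) else 0) * (Rᴴ)⁻¹))))))) := by
      rw [hMinv, hAH, hA]
      simp only [Matrix.mul_assoc]
      rw [hRR]
    rw [hid1, Matrix.trace_mul_comm]
    have hc1 : ((Matrix.of fun (k : Fin m) (l : Fin n) =>
            if (k : ℕ) = (l : ℕ) then Complex.ofReal (α l) else 0)ᴴ *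
          (Uᴴ * (Φᴴ * (Matrix.diagonal (fun k : Fin m => if (k : ℕ) < t then (1 : ℂ) else 0) *
          (Φ * (U * ((Matrix.of fun (k : Fin m) (l : Fin n) =>
            if (k : ℕ) = (l : ℕ) then Complex.ofReal (α l) else 0) * (Rᴴ)⁻¹))))))) * Rᴴ
        = (Matrix.of fun (k : Fin m) (l : Fin n) =>
            if (k : ℕ) = (l : ℕ) then Complex.ofReal (α l) else 0)ᴴ *
          (Uᴴ * (Φᴴ * (Matrix.diagonal (fun k : Fin m => if (k : ℕ) < t then (1 : ℂ) else 0) *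
          (Φ * (U * (Matrix.of fun (k : Fin m) (l : Fin n) =>
            if (k : ℕ) = (l : ℕ) then Complex.ofReal (α l) else 0)))))) := by
      simp only [Matrix.mul_assoc]
      rw [Matrix.nonsing_inv_mul _ hRH, Matrix.mul_one]
    rw [hc1, Matrix.trace_mul_comm]
    have hc2 : (Uᴴ * (Φᴴ * (Matrix.diagonal (fun k : Fin m => if (k : ℕ) < t then (1 : ℂ) else 0) *
          (Φ * (U * (Matrix.of fun (k : Fin m) (l : Fin n) =>
            if (k : ℕ) = (l : ℕ) then Complex.ofReal (α l) else 0)))))) *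
          (Matrix.of fun (k : Fin m) (l : Fin n) =>
            if (k : ℕ) = (l : ℕ) then Complex.ofReal (α l) else 0)ᴴ
        = Uᴴ * (Φᴴ * (Matrix.diagonal (fun k : Fin m => if (k : ℕ) < t then (1 : ℂ) else 0) *
          (Φ * (U * ((Matrix.of fun (k : Fin m) (l : Fin n) =>
            if (k : ℕ) = (l : ℕ) then Complex.ofReal (α l) else 0) *
          (Matrix.of fun (k : Fin m) (l : Fin n) =>
            if (k : ℕ) = (l : ℕ) then Complex.ofReal (α l) else 0)ᴴ))))) := by
      simp only [Matrix.mul_assoc]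
    rw [hc2, sigma_sigma_conj hmn' α]
    have hc3 : Uᴴ * (Φᴴ * (Matrix.diagonal (fun k : Fin m => if (k : ℕ) < t then (1 : ℂ) else 0) *
          (Φ * (U * Matrix.diagonal (fun j : Fin m => ((α (Fin.castLE hmn' j) : ℂ))^2)))))
        = (Uᴴ * (Φᴴ * (Matrix.diagonal (fun k : Fin m => if (k : ℕ) < t then (1 : ℂ) else 0) *
          (Φ * U)))) * Matrix.diagonal (fun j : Fin m => ((α (Fin.castLE hmn' j) : ℂ))^2) := by
      simp only [Matrix.mul_assoc]
    rw [hc3, Matrix.trace_mul_comm]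
  have hpt1 : ∀ (t : ℕ) (Φ : Matrix.unitaryGroup (Fin m) ℂ),
      (Matrix.trace (Aᴴ * (Φ : Matrix (Fin m) (Fin m) ℂ)ᴴ *
        Matrix.diagonal (fun k : Fin m => if (k : ℕ) < t then (1 : ℂ) else 0) *
        (Φ : Matrix (Fin m) (Fin m) ℂ) * A * (Aᴴ * A + Bᴴ * B)⁻¹)).re
      = ∑ k : Fin m, ∑ j : Fin m, (if (k:ℕ) < t then (1:ℝ) else 0) *
          ((α (Fin.castLE hmn' j))^2 *
            Complex.normSq ((((Φ * ⟨U, hU⟩ : Matrix.unitaryGroup (Fin m) ℂ) :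
              Matrix (Fin m) (Fin m) ℂ)) k j)) := by
    intro t Φ
    rw [htrace1 t (Φ : Matrix (Fin m) (Fin m) ℂ)]
    have hshape : Matrix.diagonal (fun j : Fin m => ((α (Fin.castLE hmn' j) : ℂ))^2) *
        (Uᴴ * ((Φ : Matrix (Fin m) (Fin m) ℂ)ᴴ *
          (Matrix.diagonal (fun k : Fin m => if (k : ℕ) < t then (1 : ℂ) else 0) *
          ((Φ : Matrix (Fin m) (Fin m) ℂ) * U))))
        = Matrix.diagonal (fun j : Fin m => (((α (Fin.castLE hmn' j))^2 : ℝ) : ℂ)) *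
          (star ((Φ : Matrix (Fin m) (Fin m) ℂ) * U) *
          (Matrix.diagonal (fun k : Fin m => if (k : ℕ) < t then (1 : ℂ) else 0) *
          ((Φ : Matrix (Fin m) (Fin m) ℂ) * U))) := by
      rw [Matrix.star_eq_conjTranspose, Matrix.conjTranspose_mul]
      simp only [Matrix.mul_assoc]
      congr 1
      apply congrArg Matrix.diagonal
      funext j
      push_cast
      ring
    rw [hshape, trace_diag_form]
    rfl
  have hd0 : ∀ j : Fin m, 0 ≤ (α (Fin.castLE hmn' j))^2 := fun j => sq_nonneg _
  have hdmono : ∀ j k : Fin m, j ≤ k →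
      (α (Fin.castLE hmn' k))^2 ≤ (α (Fin.castLE hmn' j))^2 := by
    intro j k hjk
    have h1 : α (Fin.castLE hmn' k) ≤ α (Fin.castLE hmn' j) := by
      apply hmono
      simp only [Fin.le_def, Fin.coe_castLE]
      exact hjk
    exact pow_le_pow_left₀ (hα0 _) h1 2
  have key1 : ∀ t : ℕ, t ≤ m →
      (⨆ Φ : Matrix.unitaryGroup (Fin m) ℂ,
        (Matrix.trace (Aᴴ * (Φ : Matrix (Fin m) (Fin m) ℂ)ᴴ *
          Matrix.diagonal (fun k : Fin m => if (k : ℕ) < t then (1 : ℂ) else 0) *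
          (Φ : Matrix (Fin m) (Fin m) ℂ) * A * (Aᴴ * A + Bᴴ * B)⁻¹)).re)
      = ∑ j ∈ Finset.univ.filter (fun j : Fin m => (j:ℕ) < t),
          (α (Fin.castLE hmn' j))^2 := by
    intro t ht
    have hstep := iSup_congr (hpt1 t)
    rw [hstep]
    have hequiv := iSup_equiv' (Equiv.mulRight (⟨U, hU⟩ : Matrix.unitaryGroup (Fin m) ℂ))
      (fun Ψ : Matrix.unitaryGroup (Fin m) ℂ =>
        ∑ k : Fin m, ∑ j : Fin m, (if (k:ℕ) < t then (1:ℝ) else 0) *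
          ((α (Fin.castLE hmn' j))^2 *
            Complex.normSq (((Ψ : Matrix (Fin m) (Fin m) ℂ)) k j)))
    simp only [Equiv.coe_mulRight] at hequiv
    rw [hequiv]
    exact sup_one (fun j => (α (Fin.castLE hmn' j))^2) hd0 hdmono t ht
  -- PART 2 SETUP
  have hSdet : IsUnit S.det := hS.det_pos.ne'.isUnit
  have hSH : Sᴴ = S := hS.isHermitian
  have hRRS : Rᴴ * R = S * S := by rw [← hM, hSsq]
  have hVstar : star (S⁻¹ * Rᴴ) = R * S⁻¹ := by
    rw [Matrix.star_eq_conjTranspose, Matrix.conjTranspose_mul,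
      Matrix.conjTranspose_conjTranspose, Matrix.conjTranspose_nonsing_inv, hSH]
  have hV : (S⁻¹ * Rᴴ) ∈ Matrix.unitaryGroup (Fin n) ℂ := by
    rw [Matrix.mem_unitaryGroup_iff, hVstar]
    calc S⁻¹ * Rᴴ * (R * S⁻¹) = S⁻¹ * (Rᴴ * R * S⁻¹) := by
          simp only [Matrix.mul_assoc]
      _ = S⁻¹ * (S * (S * S⁻¹)) := by rw [hRRS, Matrix.mul_assoc]
      _ = 1 := by
          rw [Matrix.mul_nonsing_inv _ hSdet, Matrix.mul_one,
            Matrix.nonsing_inv_mul _ hSdet]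
  have htrace2 : ∀ (t : ℕ) (W3 : Matrix (Fin n) (Fin n) ℂ) (W4 : Matrix (Fin m) (Fin m) ℂ),
      Matrix.trace (W3 * S⁻¹ * Aᴴ * W4 *
        Matrix.of (fun (k : Fin m) (l : Fin n) =>
          if (k : ℕ) = (l : ℕ) ∧ (k : ℕ) < t then (1 : ℂ) else 0))
      = ∑ b : Fin m, ∑ c : Fin m,
          if (b:ℕ) < t then ((α (Fin.castLE hmn' c) : ℂ)) *
            (W3 * (S⁻¹ * Rᴴ)) (Fin.castLE hmn' b) (Fin.castLE hmn' c) *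
            (Uᴴ * W4) c b else 0 := by
    intro t W3 W4
    rw [Matrix.trace_mul_comm]
    have hid2 : W3 * S⁻¹ * Aᴴ * W4
        = (W3 * (S⁻¹ * Rᴴ)) * (Matrix.of fun (k : Fin m) (l : Fin n) =>
            if (k : ℕ) = (l : ℕ) then Complex.ofReal (α l) else 0)ᴴ * (Uᴴ * W4) := by
      rw [hAH]
      simp only [Matrix.mul_assoc]
    rw [hid2]
    exact trace_two_form hmn' α t (W3 * (S⁻¹ * Rᴴ)) (Uᴴ * W4)
  have key2 : ∀ t : ℕ, t ≤ m →
      (⨆ W3 : Matrix.unitaryGroup (Fin n) ℂ, ⨆ W4 : Matrix.unitaryGroup (Fin m) ℂ,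
        Norm.norm (Matrix.trace ((W3 : Matrix (Fin n) (Fin n) ℂ) * S⁻¹ * Aᴴ *
          (W4 : Matrix (Fin m) (Fin m) ℂ) *
          Matrix.of (fun (k : Fin m) (l : Fin n) =>
            if (k : ℕ) = (l : ℕ) ∧ (k : ℕ) < t then (1 : ℂ) else 0))))
      = ∑ c ∈ Finset.univ.filter (fun c : Fin m => (c:ℕ) < t),
          α (Fin.castLE hmn' c) := by
    intro t ht
    set F : Matrix.unitaryGroup (Fin n) ℂ → Matrix.unitaryGroup (Fin m) ℂ → ℝ :=
      fun P Q => Norm.norm (∑ b : Fin m, ∑ c : Fin m,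
        if (b:ℕ) < t then ((α (Fin.castLE hmn' c) : ℂ)) *
          (P : Matrix (Fin n) (Fin n) ℂ) (Fin.castLE hmn' b) (Fin.castLE hmn' c) *
          (Q : Matrix (Fin m) (Fin m) ℂ) c b else 0) with hF
    have hpt2 : ∀ (W3 : Matrix.unitaryGroup (Fin n) ℂ)
        (W4 : Matrix.unitaryGroup (Fin m) ℂ),
        Norm.norm (Matrix.trace ((W3 : Matrix (Fin n) (Fin n) ℂ) * S⁻¹ * Aᴴ *
          (W4 : Matrix (Fin m) (Fin m) ℂ) *
          Matrix.of (fun (k : Fin m) (l : Fin n) =>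
            if (k : ℕ) = (l : ℕ) ∧ (k : ℕ) < t then (1 : ℂ) else 0)))
        = F (W3 * ⟨S⁻¹ * Rᴴ, hV⟩)
            ((star (⟨U, hU⟩ : Matrix.unitaryGroup (Fin m) ℂ)) * W4) := by
      intro W3 W4
      rw [htrace2 t (W3 : Matrix (Fin n) (Fin n) ℂ) (W4 : Matrix (Fin m) (Fin m) ℂ)]
      rfl
    calc (⨆ W3 : Matrix.unitaryGroup (Fin n) ℂ, ⨆ W4 : Matrix.unitaryGroup (Fin m) ℂ,
        Norm.norm (Matrix.trace ((W3 : Matrix (Fin n) (Fin n) ℂ) * S⁻¹ * Aᴴ *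
          (W4 : Matrix (Fin m) (Fin m) ℂ) *
          Matrix.of (fun (k : Fin m) (l : Fin n) =>
            if (k : ℕ) = (l : ℕ) ∧ (k : ℕ) < t then (1 : ℂ) else 0))))
        = ⨆ W3 : Matrix.unitaryGroup (Fin n) ℂ, ⨆ W4 : Matrix.unitaryGroup (Fin m) ℂ,
            F (W3 * ⟨S⁻¹ * Rᴴ, hV⟩)
              ((star (⟨U, hU⟩ : Matrix.unitaryGroup (Fin m) ℂ)) * W4) :=
          iSup_congr (fun W3 => iSup_congr (fun W4 => hpt2 W3 W4))
      _ = ⨆ W3 : Matrix.unitaryGroup (Fin n) ℂ, ⨆ Q : Matrix.unitaryGroup (Fin m) ℂ,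
            F (W3 * ⟨S⁻¹ * Rᴴ, hV⟩) Q :=
          iSup_congr (fun W3 => by
            have := iSup_equiv'
              (Equiv.mulLeft (star (⟨U, hU⟩ : Matrix.unitaryGroup (Fin m) ℂ)))
              (F (W3 * ⟨S⁻¹ * Rᴴ, hV⟩))
            simpa only [Equiv.coe_mulLeft] using this)
      _ = ⨆ P : Matrix.unitaryGroup (Fin n) ℂ, ⨆ Q : Matrix.unitaryGroup (Fin m) ℂ,
            F P Q :=
          by
            have := iSup_equiv'
              (Equiv.mulRight (⟨S⁻¹ * Rᴴ, hV⟩ : Matrix.unitaryGroup (Fin n) ℂ))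
              (fun P => ⨆ Q, F P Q)
            simpa only [Equiv.coe_mulRight] using this
      _ = _ := sup_two hmn' α hα0 (fun j k hjk => hmono hjk) t ht
  -- MAIN COMBINED
  have main : ∀ i : Fin n, (i : ℕ) < m →
      (α i ^ 2 =
        (⨆ Φ : Matrix.unitaryGroup (Fin m) ℂ,
          (Matrix.trace (Aᴴ * (Φ : Matrix (Fin m) (Fin m) ℂ)ᴴ *
            Matrix.diagonal (fun k : Fin m => if (k : ℕ) ≤ (i : ℕ) then (1 : ℂ) else 0) *
            (Φ : Matrix (Fin m) (Fin m) ℂ) * A * (Aᴴ * A + Bᴴ * B)⁻¹)).re) -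
        (⨆ Φ : Matrix.unitaryGroup (Fin m) ℂ,
          (Matrix.trace (Aᴴ * (Φ : Matrix (Fin m) (Fin m) ℂ)ᴴ *
            Matrix.diagonal (fun k : Fin m => if (k : ℕ) < (i : ℕ) then (1 : ℂ) else 0) *
            (Φ : Matrix (Fin m) (Fin m) ℂ) * A * (Aᴴ * A + Bᴴ * B)⁻¹)).re)) ∧
      (α i =
        (⨆ W3 : Matrix.unitaryGroup (Fin n) ℂ, ⨆ W4 : Matrix.unitaryGroup (Fin m) ℂ,
          Norm.norm (Matrix.trace ((W3 : Matrix (Fin n) (Fin n) ℂ) * S⁻¹ * Aᴴ *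
            (W4 : Matrix (Fin m) (Fin m) ℂ) *
            Matrix.of (fun (k : Fin m) (l : Fin n) =>
              if (k : ℕ) = (l : ℕ) ∧ (k : ℕ) ≤ (i : ℕ) then (1 : ℂ) else 0)))) -
        (⨆ W3 : Matrix.unitaryGroup (Fin n) ℂ, ⨆ W4 : Matrix.unitaryGroup (Fin m) ℂ,
          Norm.norm (Matrix.trace ((W3 : Matrix (Fin n) (Fin n) ℂ) * S⁻¹ * Aᴴ *
            (W4 : Matrix (Fin m) (Fin m) ℂ) *
            Matrix.of (fun (k : Fin m) (l : Fin n) =>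
              if (k : ℕ) = (l : ℕ) ∧ (k : ℕ) < (i : ℕ) then (1 : ℂ) else 0))))) := by
    intro i hi
    have hins : Finset.univ.filter (fun j : Fin m => (j:ℕ) < (i:ℕ)+1)
        = insert (⟨(i:ℕ), hi⟩ : Fin m)
          (Finset.univ.filter (fun j : Fin m => (j:ℕ) < (i:ℕ))) := by
      ext j
      simp only [Finset.mem_filter, Finset.mem_univ, true_and, Finset.mem_insert,
        Fin.ext_iff]
      omega
    have hnotmem : (⟨(i:ℕ), hi⟩ : Fin m) ∉
        Finset.univ.filter (fun j : Fin m => (j:ℕ) < (i:ℕ)) := by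
      simp
    have hcast : Fin.castLE hmn' (⟨(i:ℕ), hi⟩ : Fin m) = i := by
      apply Fin.ext
      rfl
    constructor
    · have hDeq : Matrix.diagonal (fun k : Fin m =>
          if (k : ℕ) ≤ (i : ℕ) then (1 : ℂ) else 0)
          = Matrix.diagonal (fun k : Fin m =>
            if (k : ℕ) < (i:ℕ)+1 then (1 : ℂ) else 0) := by
        apply congrArg Matrix.diagonal
        funext k
        simp [Nat.lt_succ_iff]
      rw [hDeq, key1 ((i:ℕ)+1) (by omega), key1 (i:ℕ) (by omega)]
      rw [hins, Finset.sum_insert hnotmem, hcast]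
      ring
    · have hEeq : (Matrix.of (fun (k : Fin m) (l : Fin n) =>
          if (k : ℕ) = (l : ℕ) ∧ (k : ℕ) ≤ (i : ℕ) then (1 : ℂ) else 0))
          = (Matrix.of (fun (k : Fin m) (l : Fin n) =>
            if (k : ℕ) = (l : ℕ) ∧ (k : ℕ) < (i:ℕ)+1 then (1 : ℂ) else 0)) := by
        ext k l
        simp [Nat.lt_succ_iff]
      rw [hEeq, key2 ((i:ℕ)+1) (by omega), key2 (i:ℕ) (by omega)]
      rw [hins, Finset.sum_insert hnotmem, hcast]
      ring
  refine ⟨fun _ => ⟨fun i hi => main i hi, fun k hk1 _ => hzero k hk1⟩,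
    fun h2 i hi => main i (by omega)⟩
end

section
/- Let n ≤ p and let {A,B} be an (m,p,n)-GMP with GSVD as in the context, with generalized singular values (αᵢ, βᵢ). Then for every ⌊n/2⌋+1 ≤ i ≤ n the following two model formulations hold simultaneously: (i) βᵢ² = max_{Φ ∈ 𝕌_p} Re tr(Bᴴ Φᴴ P_i Φ B (AᴴA + BᴴB)^{-1}) − max_{Φ ∈ 𝕌_p} Re tr(Bᴴ Φᴴ P_{i+1} Φ B (AᴴA + BᴴB)^{-1}); and (ii) βᵢ = max_{Ξ₁ ∈ 𝕌_p, Ξ₂ ∈ 𝕌_n} |tr(Ξ₁ B (AᴴA + BᴴB)^{-1/2} Ξ₂ ℋ_i)| − max_{Ξ₁ ∈ 𝕌_p, Ξ₂ ∈ 𝕌_n} |tr(Ξ₁ B (AᴴA + BᴴB)^{-1/2} Ξ₂ ℋ_{i+1})|. -/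
open Matrix BigOperators
open scoped ComplexOrder
open Finset


private lemma card_filter_ge (N s : ℕ) :
    (Finset.univ.filter fun j : Fin N => s ≤ (j : ℕ)).card = N - s := by
  rw [show N - s = (Finset.Ico s N).card from (Nat.card_Ico s N).symm]
  apply Finset.card_bij (fun (j : Fin N) _ => (j : ℕ))
  · intro a ha
    simp only [Finset.mem_filter, Finset.mem_univ, true_and] at ha
    exact Finset.mem_Ico.2 ⟨ha, a.2⟩
  · intro a _ b _ h
    exact Fin.ext h
  · intro b hb
    rcases Finset.mem_Ico.1 hb with ⟨h1, h2⟩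
    exact ⟨⟨b, h2⟩, by simp [h1], rfl⟩

private lemma key_sum {N : ℕ} (s : ℕ) (hs : s ≤ N) (d c : Fin N → ℝ)
    (hd0 : ∀ j, 0 ≤ d j) (hmono : Monotone d)
    (hc0 : ∀ j, 0 ≤ c j) (hc1 : ∀ j, c j ≤ 1)
    (hsum : ∑ j, c j ≤ (N : ℝ) - s) :
    ∑ j, c j * d j ≤ ∑ j ∈ Finset.univ.filter (fun j : Fin N => s ≤ (j : ℕ)), d j := by
  rcases eq_or_lt_of_le hs with heq | hlt
  · have hfe : (Finset.univ.filter fun j : Fin N => s ≤ (j : ℕ)) = ∅ := by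
      apply Finset.filter_false_of_mem; intro j _; subst heq; exact Nat.not_le.2 j.2
    rw [hfe, Finset.sum_empty]
    have hc : ∀ j, c j = 0 := by
      intro j
      have h1 : ∑ j, c j ≤ 0 := by subst heq; simpa using hsum
      have h2 : (0:ℝ) ≤ ∑ j, c j := Finset.sum_nonneg fun j _ => hc0 j
      have := Finset.sum_eq_zero_iff_of_nonneg (fun j _ => hc0 j) |>.1 (le_antisymm h1 h2)
      exact this j (Finset.mem_univ j)
    simp [hc]
  · set t := d ⟨s, hlt⟩ with ht
    have ht0 : 0 ≤ t := hd0 _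
    have hstep : ∀ j : Fin N, c j * d j ≤
        if s ≤ (j : ℕ) then d j - (1 - c j) * t else c j * t := by
      intro j
      by_cases h : s ≤ (j : ℕ)
      · simp only [h, if_true]
        have hdt : t ≤ d j := hmono (show (⟨s, hlt⟩ : Fin N) ≤ j from h)
        nlinarith [hc1 j, hc0 j]
      · simp only [h, if_false]
        have hdt : d j ≤ t := hmono (show j ≤ (⟨s, hlt⟩ : Fin N) from le_of_lt (Nat.lt_of_not_le h))
        nlinarith [hc0 j]
    have h1 : ∑ j, c j * d j ≤ ∑ j : Fin N, (if s ≤ (j : ℕ) then d j - (1 - c j) * t else c j * t) :=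
      Finset.sum_le_sum fun j _ => hstep j
    set Fge := Finset.univ.filter (fun j : Fin N => s ≤ (j : ℕ)) with hFge
    set Flt := Finset.univ.filter (fun j : Fin N => ¬ s ≤ (j : ℕ)) with hFlt
    have hF := Finset.sum_filter_add_sum_filter_not Finset.univ (fun j : Fin N => s ≤ (j : ℕ))
      (fun j => if s ≤ (j : ℕ) then d j - (1 - c j) * t else c j * t)
    have e1 : ∑ j ∈ Fge, (if s ≤ (j : ℕ) then d j - (1 - c j) * t else c j * t)
        = ∑ j ∈ Fge, (d j - (1 - c j) * t) := by
      apply Finset.sum_congr rfl; intro j hj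
      rw [if_pos (Finset.mem_filter.1 hj).2]
    have e2 : ∑ j ∈ Flt, (if s ≤ (j : ℕ) then d j - (1 - c j) * t else c j * t)
        = ∑ j ∈ Flt, c j * t := by
      apply Finset.sum_congr rfl; intro j hj
      rw [if_neg (Finset.mem_filter.1 hj).2]
    have hcsplit : ∑ j ∈ Fge, c j + ∑ j ∈ Flt, c j = ∑ j, c j :=
      Finset.sum_filter_add_sum_filter_not Finset.univ _ c
    have hcard : ((Fge).card : ℝ) = (N:ℝ) - s := by
      rw [hFge, card_filter_ge, Nat.cast_sub hs]
    have hA : ∑ j ∈ Fge, (d j - (1 - c j) * t)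
        = (∑ j ∈ Fge, d j) - ((N:ℝ) - s) * t + (∑ j ∈ Fge, c j) * t := by
      have hterm : ∀ j : Fin N, d j - (1 - c j) * t = (d j - t) + c j * t := by intro j; ring
      simp_rw [hterm]
      rw [Finset.sum_add_distrib, Finset.sum_sub_distrib, Finset.sum_const,
        nsmul_eq_mul, hcard, ← Finset.sum_mul]
    have hB : ∑ j ∈ Flt, c j * t = (∑ j ∈ Flt, c j) * t := (Finset.sum_mul _ _ _).symm
    have h2 : ∑ j : Fin N, (if s ≤ (j : ℕ) then d j - (1 - c j) * t else c j * t)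
        = (∑ j ∈ Fge, d j) + ((∑ j, c j) - ((N:ℝ) - s)) * t := by
      rw [← hF, e1, e2, hA, hB, ← hcsplit]; ring
    have h3 : ((∑ j, c j) - ((N:ℝ) - s)) * t ≤ 0 := by nlinarith [hsum, ht0]
    linarith


section helpers

variable {p n : ℕ}

private def emb (hnp : n ≤ p) (l : Fin n) : Fin p := ⟨p - n + l, by omega⟩

private lemma emb_inj (hnp : n ≤ p) : Function.Injective (emb hnp) := by
  intro a b h
  simp only [emb, Fin.mk.injEq] at h
  exact Fin.ext (by omega)

private lemma emb_cond (hnp : n ≤ p) (k : Fin p) (l : Fin n) :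
    ((k : ℕ) + n = p + (l : ℕ)) ↔ k = emb hnp l := by
  rw [Fin.ext_iff]
  simp only [emb]
  omega

-- the Sigma matrix
private def Sg (hnp : n ≤ p) (β : Fin n → ℝ) : Matrix (Fin p) (Fin n) ℂ :=
  Matrix.of fun (k : Fin p) (l : Fin n) =>
    if (k : ℕ) + n = p + (l : ℕ) then Complex.ofReal (β l) else 0

private lemma Sg_apply (hnp : n ≤ p) (β : Fin n → ℝ) (k : Fin p) (l : Fin n) :
    Sg hnp β k l = if k = emb hnp l then Complex.ofReal (β l) else 0 := by
  simp only [Sg, Matrix.of_apply, emb_cond hnp]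

private lemma Sg_apply_emb (hnp : n ≤ p) (β : Fin n → ℝ) (l : Fin n) :
    Sg hnp β (emb hnp l) l = Complex.ofReal (β l) := by
  rw [Sg_apply, if_pos rfl]

-- column collapse : (X * Sg) a l = X a (emb l) * β l
private lemma mul_Sg_apply {q : Type*} [Fintype q] (hnp : n ≤ p) (β : Fin n → ℝ)
    (X : Matrix q (Fin p) ℂ) (a : q) (l : Fin n) :
    (X * Sg hnp β) a l = X a (emb hnp l) * Complex.ofReal (β l) := by
  rw [Matrix.mul_apply]
  simp_rw [Sg_apply hnp β, mul_ite, mul_zero]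
  rw [Finset.sum_ite_eq' Finset.univ (emb hnp l) (fun k => X a k * Complex.ofReal (β l))]
  simp

-- row collapse : (Sgᴴ * Y) l b = β l * Y (emb l) b
private lemma Sg_conjT_mul_apply {q : Type*} [Fintype q] (hnp : n ≤ p) (β : Fin n → ℝ)
    (Y : Matrix (Fin p) q ℂ) (l : Fin n) (b : q) :
    ((Sg hnp β)ᴴ * Y) l b = Complex.ofReal (β l) * Y (emb hnp l) b := by
  rw [Matrix.mul_apply]
  simp_rw [Matrix.conjTranspose_apply, Sg_apply hnp β, Complex.star_def, apply_ite (starRingEnd ℂ), map_zero,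
    Complex.conj_ofReal, ite_mul, zero_mul]
  rw [Finset.sum_ite_eq' Finset.univ (emb hnp l) (fun k => Complex.ofReal (β l) * Y k b)]
  simp

private lemma Sg_conjT_mul_Sg (hnp : n ≤ p) (β : Fin n → ℝ) :
    (Sg hnp β)ᴴ * Sg hnp β
      = Matrix.diagonal (fun l : Fin n => Complex.ofReal (β l ^ 2)) := by
  ext l l'
  rw [Sg_conjT_mul_apply hnp β, Sg_apply hnp β, Matrix.diagonal_apply]
  by_cases h : l = l'
  · subst h
    rw [if_pos rfl, if_pos rfl]
    rw [← Complex.ofReal_mul]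
    norm_num [sq]
  · rw [if_neg (fun hh => h (emb_inj hnp hh)), if_neg h, mul_zero]

-- trace with Sg on both sides
private lemma trace_Sg_sandwich (hnp : n ≤ p) (β : Fin n → ℝ)
    (G : Matrix (Fin p) (Fin p) ℂ) :
    Matrix.trace ((Sg hnp β)ᴴ * G * (Sg hnp β))
      = ∑ l : Fin n, Complex.ofReal (β l ^ 2) * G (emb hnp l) (emb hnp l) := by
  rw [Matrix.trace]
  apply Finset.sum_congr rfl
  intro l _
  rw [Matrix.diag]
  rw [mul_Sg_apply hnp β ((Sg hnp β)ᴴ * G) l l, Sg_conjT_mul_apply hnp β G l]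
  push_cast
  ring

-- unitary facts
private lemma unitary_col {N : ℕ} {U : Matrix (Fin N) (Fin N) ℂ}
    (hU : U ∈ Matrix.unitaryGroup (Fin N) ℂ) (a : Fin N) :
    ∑ k : Fin N, Complex.normSq (U k a) = 1 := by
  have h := hU.1
  have h2 := congrArg (fun M : Matrix (Fin N) (Fin N) ℂ => M a a) h
  simp only [Matrix.star_eq_conjTranspose] at h2
  rw [Matrix.mul_apply] at h2
  simp only [Matrix.conjTranspose_apply, Matrix.one_apply_eq] at h2
  have h3 : ∀ k : Fin N, star (U k a) * U k a = (Complex.normSq (U k a) : ℂ) := by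
    intro k; rw [Complex.star_def, ← Complex.normSq_eq_conj_mul_self]
  rw [Finset.sum_congr rfl (fun k _ => h3 k), ← Complex.ofReal_sum] at h2
  exact_mod_cast h2

private lemma unitary_row {N : ℕ} {U : Matrix (Fin N) (Fin N) ℂ}
    (hU : U ∈ Matrix.unitaryGroup (Fin N) ℂ) (a : Fin N) :
    ∑ k : Fin N, Complex.normSq (U a k) = 1 := by
  have h := hU.2
  have h2 := congrArg (fun M : Matrix (Fin N) (Fin N) ℂ => M a a) h
  simp only [Matrix.star_eq_conjTranspose] at h2
  rw [Matrix.mul_apply] at h2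
  simp only [Matrix.conjTranspose_apply, Matrix.one_apply_eq] at h2
  have h3 : ∀ k : Fin N, U a k * star (U a k) = (Complex.normSq (U a k) : ℂ) := by
    intro k; rw [Complex.star_def, Complex.mul_conj]
  rw [Finset.sum_congr rfl (fun k _ => h3 k), ← Complex.ofReal_sum] at h2
  exact_mod_cast h2

-- sum over embedded indices bounded by full sum
private lemma sum_emb_le (hnp : n ≤ p) (f : Fin p → ℝ) (hf : ∀ a, 0 ≤ f a)
    (s : Finset (Fin n)) :
    ∑ l ∈ s, f (emb hnp l) ≤ ∑ a : Fin p, f a := by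
  rw [← Finset.sum_image (g := emb hnp) (f := f)
    (fun x _ y _ h => emb_inj hnp h)]
  exact Finset.sum_le_sum_of_subset_of_nonneg (Finset.subset_univ _) (fun a _ _ => hf a)

end helpers

private lemma partI {m p n : ℕ} (hnp : n ≤ p)
    (A : Matrix (Fin m) (Fin n) ℂ) (B : Matrix (Fin p) (Fin n) ℂ)
    (V : Matrix (Fin p) (Fin p) ℂ) (hV : V ∈ Matrix.unitaryGroup (Fin p) ℂ)
    (R : Matrix (Fin n) (Fin n) ℂ) (hR : IsUnit R.det)
    (β : Fin n → ℝ) (hβ0 : ∀ k, 0 ≤ β k) (hmono : Monotone β)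
    (hB : B = V * Sg hnp β * R)
    (hAA : Aᴴ * A = Rᴴ * Matrix.diagonal (fun l => Complex.ofReal (1 - β l ^ 2)) * R)
    (s : ℕ) (hs : s ≤ n) :
    (⨆ Φ : Matrix.unitaryGroup (Fin p) ℂ,
      (Matrix.trace (Bᴴ * (Φ : Matrix (Fin p) (Fin p) ℂ)ᴴ *
        Matrix.diagonal (fun k : Fin p => if p + s ≤ (k : ℕ) + n then (1 : ℂ) else 0) *
        (Φ : Matrix (Fin p) (Fin p) ℂ) * B * (Aᴴ * A + Bᴴ * B)⁻¹)).re)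
    = ∑ l ∈ Finset.univ.filter (fun l : Fin n => s ≤ (l : ℕ)), (β l) ^ 2 := by
  classical
  set P : Matrix (Fin p) (Fin p) ℂ :=
    Matrix.diagonal (fun k : Fin p => if p + s ≤ (k : ℕ) + n then (1 : ℂ) else 0) with hP
  have hRH : IsUnit (Rᴴ).det := by rw [Matrix.det_conjTranspose]; exact hR.star
  have hVU : Vᴴ * V = 1 := by rw [← Matrix.star_eq_conjTranspose]; exact hV.1
  -- M = Rᴴ R
  have hM : Aᴴ * A + Bᴴ * B = Rᴴ * R := by
    have e1 : Bᴴ * B = Rᴴ * (Matrix.diagonal (fun l => Complex.ofReal (β l ^ 2)) * R) := by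
      rw [hB]
      simp only [Matrix.conjTranspose_mul, Matrix.mul_assoc]
      rw [show Vᴴ * (V * (Sg hnp β * R)) = Sg hnp β * R from by
        rw [← Matrix.mul_assoc, hVU, Matrix.one_mul]]
      rw [← Matrix.mul_assoc ((Sg hnp β)ᴴ), Sg_conjT_mul_Sg hnp β]
    rw [hAA, e1, Matrix.mul_assoc Rᴴ, ← Matrix.mul_add]
    rw [← Matrix.add_mul, Matrix.diagonal_add]
    rw [show (fun l => Complex.ofReal (1 - β l ^ 2) + Complex.ofReal (β l ^ 2))
        = fun _ : Fin n => (1 : ℂ) from by funext l; push_cast; ring]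
    rw [Matrix.diagonal_one, Matrix.one_mul]
  -- general trace formula
  have hgen : ∀ Φ : Matrix (Fin p) (Fin p) ℂ,
      Matrix.trace (Bᴴ * Φᴴ * P * Φ * B * (Aᴴ * A + Bᴴ * B)⁻¹)
      = ∑ l : Fin n, Complex.ofReal (β l ^ 2) *
          (((Φ * V)ᴴ * P * (Φ * V)) (emb hnp l) (emb hnp l)) := by
    intro Φ
    have hmat : Bᴴ * Φᴴ * P * Φ * B * (Aᴴ * A + Bᴴ * B)⁻¹
        = Rᴴ * ((Sg hnp β)ᴴ * ((Φ * V)ᴴ * P * (Φ * V)) * Sg hnp β) * (Rᴴ)⁻¹ := by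
      rw [hM, hB, Matrix.mul_inv_rev]
      simp only [Matrix.conjTranspose_mul, Matrix.mul_assoc]
      rw [show R * (R⁻¹ * (Rᴴ)⁻¹) = (Rᴴ)⁻¹ from by
        rw [← Matrix.mul_assoc, Matrix.mul_nonsing_inv R hR, one_mul]]
    rw [hmat, Matrix.trace_mul_cycle, ← Matrix.mul_assoc,
      Matrix.nonsing_inv_mul Rᴴ hRH, Matrix.one_mul, trace_Sg_sandwich hnp β]
  -- diagonal entries of Uᴴ P U
  have hdiagentry : ∀ (U : Matrix (Fin p) (Fin p) ℂ) (a : Fin p),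
      ((Uᴴ * P * U) a a) = Complex.ofReal (∑ k ∈ Finset.univ.filter
        (fun k : Fin p => p + s ≤ (k : ℕ) + n), Complex.normSq (U k a)) := by
    intro U a
    rw [Matrix.mul_apply]
    have h1 : ∀ k : Fin p, (Uᴴ * P) a k
        = star (U k a) * (if p + s ≤ (k : ℕ) + n then (1 : ℂ) else 0) := by
      intro k; rw [hP, Matrix.mul_diagonal, Matrix.conjTranspose_apply]
    simp_rw [h1]
    have h2 : ∀ k : Fin p, (star (U k a) * (if p + s ≤ (k : ℕ) + n then (1 : ℂ) else 0)) * U k a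
        = if p + s ≤ (k : ℕ) + n then (Complex.normSq (U k a) : ℂ) else 0 := by
      intro k
      by_cases h : p + s ≤ (k : ℕ) + n
      · rw [if_pos h, if_pos h, mul_one, Complex.star_def, ← Complex.normSq_eq_conj_mul_self]
      · rw [if_neg h, if_neg h, mul_zero, zero_mul]
    simp_rw [h2]
    rw [← Finset.sum_filter, Complex.ofReal_sum]
  -- the real-valued coefficient
  set F : Finset (Fin p) := Finset.univ.filter (fun k : Fin p => p + s ≤ (k : ℕ) + n) with hF
  have hre : ∀ Φ : Matrix (Fin p) (Fin p) ℂ,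
      (Matrix.trace (Bᴴ * Φᴴ * P * Φ * B * (Aᴴ * A + Bᴴ * B)⁻¹)).re
      = ∑ l : Fin n, (β l ^ 2) * (∑ k ∈ F, Complex.normSq ((Φ * V) k (emb hnp l))) := by
    intro Φ
    rw [hgen Φ]
    simp_rw [hdiagentry (Φ * V), ← Complex.ofReal_mul, ← Complex.ofReal_sum, Complex.ofReal_re]
  -- cardinality of F
  have hcardF : (F.card : ℝ) = (n : ℝ) - s := by
    have h1 : F = Finset.univ.filter (fun k : Fin p => (p + s - n) ≤ (k : ℕ)) := by
      apply Finset.filter_congr; intro k _; constructor <;> (intro; omega)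
    rw [h1, card_filter_ge]
    have : p - (p + s - n) = n - s := by omega
    rw [this, Nat.cast_sub hs]
  -- bound for unitary U
  have hbound : ∀ U : Matrix (Fin p) (Fin p) ℂ, U ∈ Matrix.unitaryGroup (Fin p) ℂ →
      ∑ l : Fin n, (β l ^ 2) * (∑ k ∈ F, Complex.normSq (U k (emb hnp l)))
      ≤ ∑ l ∈ Finset.univ.filter (fun l : Fin n => s ≤ (l : ℕ)), (β l) ^ 2 := by
    intro U hU
    set c : Fin n → ℝ := fun l => ∑ k ∈ F, Complex.normSq (U k (emb hnp l)) with hc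
    have hc0 : ∀ l, 0 ≤ c l := fun l =>
      Finset.sum_nonneg fun k _ => Complex.normSq_nonneg _
    have hc1 : ∀ l, c l ≤ 1 := by
      intro l
      calc c l ≤ ∑ k : Fin p, Complex.normSq (U k (emb hnp l)) :=
            Finset.sum_le_sum_of_subset_of_nonneg (Finset.subset_univ _)
              (fun k _ _ => Complex.normSq_nonneg _)
        _ = 1 := unitary_col hU (emb hnp l)
    have hcsum : ∑ l : Fin n, c l ≤ (n : ℝ) - s := by
      have h1 : ∑ l : Fin n, c l = ∑ k ∈ F, ∑ l : Fin n, Complex.normSq (U k (emb hnp l)) :=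
        Finset.sum_comm
      rw [h1]
      calc ∑ k ∈ F, ∑ l : Fin n, Complex.normSq (U k (emb hnp l))
          ≤ ∑ k ∈ F, (1 : ℝ) := by
            apply Finset.sum_le_sum
            intro k _
            calc ∑ l : Fin n, Complex.normSq (U k (emb hnp l))
                ≤ ∑ a : Fin p, Complex.normSq (U k a) :=
                  sum_emb_le hnp _ (fun a => Complex.normSq_nonneg _) _
              _ = 1 := unitary_row hU k
        _ = (F.card : ℝ) := by rw [Finset.sum_const, nsmul_eq_mul, mul_one]
        _ = (n : ℝ) - s := hcardF
    have := key_sum s hs (fun l => β l ^ 2) c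
      (fun l => sq_nonneg _) (fun a b hab => pow_le_pow_left₀ (hβ0 a) (hmono hab) 2)
      hc0 hc1 hcsum
    calc ∑ l : Fin n, (β l ^ 2) * c l = ∑ l : Fin n, c l * (β l ^ 2) := by
          apply Finset.sum_congr rfl; intro l _; ring
      _ ≤ _ := this
  -- value at the witness
  have hwit : ∀ l : Fin n,
      ∑ k ∈ F, Complex.normSq ((1 : Matrix (Fin p) (Fin p) ℂ) k (emb hnp l))
      = if s ≤ (l : ℕ) then (1 : ℝ) else 0 := by
    intro l
    have h1 : ∀ k : Fin p, Complex.normSq ((1 : Matrix (Fin p) (Fin p) ℂ) k (emb hnp l))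
        = if k = emb hnp l then (1 : ℝ) else 0 := by
      intro k
      rw [Matrix.one_apply]
      by_cases h : k = emb hnp l
      · simp [h]
      · simp [h]
    simp_rw [h1]
    rw [Finset.sum_ite_eq' F (emb hnp l) (fun _ => (1 : ℝ))]
    have hmem : emb hnp l ∈ F ↔ s ≤ (l : ℕ) := by
      rw [hF, Finset.mem_filter]
      simp only [Finset.mem_univ, true_and]
      show p + s ≤ (p - n + (l : ℕ)) + n ↔ s ≤ (l : ℕ)
      omega
    by_cases h : s ≤ (l : ℕ)
    · rw [if_pos (hmem.2 h), if_pos h]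
    · rw [if_neg (fun hh => h (hmem.1 hh)), if_neg h]
  set T : ℝ := ∑ l ∈ Finset.univ.filter (fun l : Fin n => s ≤ (l : ℕ)), (β l) ^ 2 with hT
  set f : Matrix.unitaryGroup (Fin p) ℂ → ℝ := fun Φ =>
    (Matrix.trace (Bᴴ * (Φ : Matrix (Fin p) (Fin p) ℂ)ᴴ * P *
      (Φ : Matrix (Fin p) (Fin p) ℂ) * B * (Aᴴ * A + Bᴴ * B)⁻¹)).re with hf
  have hfb : ∀ Φ : Matrix.unitaryGroup (Fin p) ℂ, f Φ ≤ T := by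
    intro Φ
    rw [hf]
    dsimp only
    rw [hre (Φ : Matrix (Fin p) (Fin p) ℂ)]
    exact hbound _ (mul_mem Φ.2 hV)
  have hΦ0mem : star V ∈ Matrix.unitaryGroup (Fin p) ℂ := Unitary.star_mem hV
  set Φ0 : Matrix.unitaryGroup (Fin p) ℂ := ⟨star V, hΦ0mem⟩ with hΦ0
  have hfΦ0 : f Φ0 = T := by
    rw [hf]
    dsimp only
    rw [hre (star V)]
    rw [show star V * V = (1 : Matrix (Fin p) (Fin p) ℂ) from hV.1]
    simp_rw [hwit]
    rw [hT, Finset.sum_filter]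
    apply Finset.sum_congr rfl
    intro l _
    by_cases h : s ≤ (l : ℕ)
    · rw [if_pos h, if_pos h, mul_one]
    · rw [if_neg h, if_neg h, mul_zero]
  apply le_antisymm
  · exact ciSup_le hfb
  · have hbdd : BddAbove (Set.range f) := by
      refine ⟨T, ?_⟩
      rintro x ⟨Φ, rfl⟩
      exact hfb Φ
    calc T = f Φ0 := hfΦ0.symm
      _ ≤ ⨆ Φ, f Φ := le_ciSup hbdd Φ0

private lemma cs_le_one {ι : Type*} (s : Finset ι) (f g : ι → ℝ)
    (hf0 : ∀ i ∈ s, 0 ≤ f i) (hg0 : ∀ i ∈ s, 0 ≤ g i)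
    (hf : ∑ i ∈ s, f i ^ 2 ≤ 1) (hg : ∑ i ∈ s, g i ^ 2 ≤ 1) :
    ∑ i ∈ s, f i * g i ≤ 1 := by
  have h := Finset.sum_mul_sq_le_sq_mul_sq s f g
  have h0 : 0 ≤ ∑ i ∈ s, f i * g i :=
    Finset.sum_nonneg fun i hi => mul_nonneg (hf0 i hi) (hg0 i hi)
  have h1 : 0 ≤ ∑ i ∈ s, f i ^ 2 := Finset.sum_nonneg fun i _ => sq_nonneg _
  nlinarith

private lemma trace_mul_H {p n : ℕ} (hnp : n ≤ p) (s : ℕ) (M : Matrix (Fin p) (Fin n) ℂ) :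
    Matrix.trace (M * Matrix.of (fun (k : Fin n) (l : Fin p) =>
      if (l : ℕ) + n = p + (k : ℕ) ∧ s ≤ (k : ℕ) then (1 : ℂ) else 0))
    = ∑ k ∈ Finset.univ.filter (fun k : Fin n => s ≤ (k : ℕ)), M (emb hnp k) k := by
  classical
  have h1 : ∀ (k : Fin n) (a : Fin p),
      M a k * (if (a : ℕ) + n = p + (k : ℕ) ∧ s ≤ (k : ℕ) then (1 : ℂ) else 0)
      = if s ≤ (k : ℕ) then (if a = emb hnp k then M a k else 0) else 0 := by
    intro k a
    by_cases hk : s ≤ (k : ℕ)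
    · by_cases ha : a = emb hnp k
      · have hc := (emb_cond hnp a k).2 ha
        subst ha
        rw [if_pos ⟨hc, hk⟩, mul_one, if_pos hk, if_pos rfl]
      · have hc : ¬((a : ℕ) + n = p + (k : ℕ)) := fun hh => ha ((emb_cond hnp a k).1 hh)
        rw [if_neg (fun hh : _ ∧ _ => hc hh.1), mul_zero, if_pos hk, if_neg ha]
    · rw [if_neg (fun hh : _ ∧ _ => hk hh.2), mul_zero, if_neg hk]
  calc Matrix.trace (M * Matrix.of (fun (k : Fin n) (l : Fin p) =>
        if (l : ℕ) + n = p + (k : ℕ) ∧ s ≤ (k : ℕ) then (1 : ℂ) else 0))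
      = ∑ a : Fin p, ∑ k : Fin n, M a k * (if (a : ℕ) + n = p + (k : ℕ) ∧ s ≤ (k : ℕ)
          then (1 : ℂ) else 0) := by
        rw [Matrix.trace]
        apply Finset.sum_congr rfl
        intro a _
        rw [Matrix.diag, Matrix.mul_apply]
        rfl
    _ = ∑ k : Fin n, ∑ a : Fin p, M a k * (if (a : ℕ) + n = p + (k : ℕ) ∧ s ≤ (k : ℕ)
          then (1 : ℂ) else 0) := Finset.sum_comm
    _ = ∑ k : Fin n, (if s ≤ (k : ℕ) then M (emb hnp k) k else 0) := by
        apply Finset.sum_congr rfl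
        intro k _
        simp_rw [h1 k]
        by_cases hk : s ≤ (k : ℕ)
        · simp only [hk, if_true]
          rw [Finset.sum_ite_eq' Finset.univ (emb hnp k) (fun a => M a k)]
          simp
        · simp [hk]
    _ = _ := (Finset.sum_filter _ _).symm

private lemma M_eq {m p n : ℕ} (hnp : n ≤ p)
    (A : Matrix (Fin m) (Fin n) ℂ) (B : Matrix (Fin p) (Fin n) ℂ)
    (V : Matrix (Fin p) (Fin p) ℂ) (hV : V ∈ Matrix.unitaryGroup (Fin p) ℂ)
    (R : Matrix (Fin n) (Fin n) ℂ) (β : Fin n → ℝ)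
    (hB : B = V * Sg hnp β * R)
    (hAA : Aᴴ * A = Rᴴ * Matrix.diagonal (fun l => Complex.ofReal (1 - β l ^ 2)) * R) :
    Aᴴ * A + Bᴴ * B = Rᴴ * R := by
  have hVU : Vᴴ * V = 1 := by rw [← Matrix.star_eq_conjTranspose]; exact hV.1
  have e1 : Bᴴ * B = Rᴴ * (Matrix.diagonal (fun l => Complex.ofReal (β l ^ 2)) * R) := by
    rw [hB]
    simp only [Matrix.conjTranspose_mul, Matrix.mul_assoc]
    rw [show Vᴴ * (V * (Sg hnp β * R)) = Sg hnp β * R from by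
      rw [← Matrix.mul_assoc, hVU, Matrix.one_mul]]
    rw [← Matrix.mul_assoc ((Sg hnp β)ᴴ), Sg_conjT_mul_Sg hnp β]
  rw [hAA, e1, Matrix.mul_assoc Rᴴ, ← Matrix.mul_add]
  rw [← Matrix.add_mul, Matrix.diagonal_add]
  rw [show (fun l => Complex.ofReal (1 - β l ^ 2) + Complex.ofReal (β l ^ 2))
      = fun _ : Fin n => (1 : ℂ) from by funext l; push_cast; ring]
  rw [Matrix.diagonal_one, Matrix.one_mul]

private lemma partII {m p n : ℕ} (hnp : n ≤ p)
    (A : Matrix (Fin m) (Fin n) ℂ) (B : Matrix (Fin p) (Fin n) ℂ)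
    (V : Matrix (Fin p) (Fin p) ℂ) (hV : V ∈ Matrix.unitaryGroup (Fin p) ℂ)
    (R : Matrix (Fin n) (Fin n) ℂ) (hR : IsUnit R.det)
    (β : Fin n → ℝ) (hβ0 : ∀ k, 0 ≤ β k) (hmono : Monotone β)
    (hB : B = V * Sg hnp β * R)
    (hAA : Aᴴ * A = Rᴴ * Matrix.diagonal (fun l => Complex.ofReal (1 - β l ^ 2)) * R)
    (S : Matrix (Fin n) (Fin n) ℂ) (hS : S.PosDef)
    (hSsq : S * S = Aᴴ * A + Bᴴ * B)
    (s : ℕ) (hs : s ≤ n) :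
    (⨆ X1 : Matrix.unitaryGroup (Fin p) ℂ, ⨆ X2 : Matrix.unitaryGroup (Fin n) ℂ,
      norm (Matrix.trace ((X1 : Matrix (Fin p) (Fin p) ℂ) * B * S⁻¹ *
        (X2 : Matrix (Fin n) (Fin n) ℂ) *
        Matrix.of (fun (k : Fin n) (l : Fin p) =>
          if (l : ℕ) + n = p + (k : ℕ) ∧ s ≤ (k : ℕ) then (1 : ℂ) else 0))))
    = ∑ l ∈ Finset.univ.filter (fun l : Fin n => s ≤ (l : ℕ)), β l := by
  classical
  set H : Matrix (Fin n) (Fin p) ℂ := Matrix.of (fun (k : Fin n) (l : Fin p) =>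
    if (l : ℕ) + n = p + (k : ℕ) ∧ s ≤ (k : ℕ) then (1 : ℂ) else 0) with hH
  set Fn : Finset (Fin n) := Finset.univ.filter (fun k : Fin n => s ≤ (k : ℕ)) with hFn
  have hM : Aᴴ * A + Bᴴ * B = Rᴴ * R := M_eq hnp A B V hV R β hB hAA
  have hdetS : IsUnit S.det := (hS.det_pos.ne').isUnit
  have hSH : Sᴴ = S := hS.1
  set W : Matrix (Fin n) (Fin n) ℂ := R * S⁻¹ with hW
  have hRS : Rᴴ * R = S * S := (hSsq.trans hM).symm
  have hWW : star W * W = 1 := by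
    rw [hW, Matrix.star_eq_conjTranspose, Matrix.conjTranspose_mul,
      Matrix.conjTranspose_nonsing_inv, hSH]
    calc S⁻¹ * Rᴴ * (R * S⁻¹) = S⁻¹ * (Rᴴ * R) * S⁻¹ := by simp only [Matrix.mul_assoc]
      _ = S⁻¹ * (S * S) * S⁻¹ := by rw [hRS]
      _ = (S⁻¹ * S) * (S * S⁻¹) := by simp only [Matrix.mul_assoc]
      _ = 1 := by
          rw [Matrix.nonsing_inv_mul S hdetS, Matrix.mul_nonsing_inv S hdetS, Matrix.one_mul]
  have hWmem : W ∈ Matrix.unitaryGroup (Fin n) ℂ := by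
    rw [Matrix.mem_unitaryGroup_iff]
    exact mul_eq_one_comm.1 hWW
  have hmat : ∀ (X1 : Matrix (Fin p) (Fin p) ℂ) (X2 : Matrix (Fin n) (Fin n) ℂ),
      X1 * B * S⁻¹ * X2 = (X1 * V) * Sg hnp β * (W * X2) := by
    intro X1 X2
    rw [hB, hW]
    simp only [Matrix.mul_assoc]
  have hufmla : ∀ (U1 : Matrix (Fin p) (Fin p) ℂ) (U2 : Matrix (Fin n) (Fin n) ℂ),
      Matrix.trace (U1 * Sg hnp β * U2 * H)
      = ∑ k ∈ Fn, ∑ l : Fin n, U1 (emb hnp k) (emb hnp l) * Complex.ofReal (β l) * U2 l k := by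
    intro U1 U2
    rw [hH, trace_mul_H hnp s (U1 * Sg hnp β * U2)]
    apply Finset.sum_congr rfl
    intro k _
    rw [Matrix.mul_apply]
    apply Finset.sum_congr rfl
    intro l _
    rw [mul_Sg_apply hnp β U1 (emb hnp k) l]
  set T : ℝ := ∑ l ∈ Finset.univ.filter (fun l : Fin n => s ≤ (l : ℕ)), β l with hT
  -- main bound
  have hbound : ∀ (U1 : Matrix (Fin p) (Fin p) ℂ) (U2 : Matrix (Fin n) (Fin n) ℂ),
      U1 ∈ Matrix.unitaryGroup (Fin p) ℂ → U2 ∈ Matrix.unitaryGroup (Fin n) ℂ →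
      norm (Matrix.trace (U1 * Sg hnp β * U2 * H)) ≤ T := by
    intro U1 U2 hU1 hU2
    rw [hufmla U1 U2]
    set c : Fin n → ℝ := fun l =>
      ∑ k ∈ Fn, norm (U1 (emb hnp k) (emb hnp l)) * norm (U2 l k) with hc
    have habs : ∀ (k : Fin n) (l : Fin n),
        norm (U1 (emb hnp k) (emb hnp l) * Complex.ofReal (β l) * U2 l k)
        = norm (U1 (emb hnp k) (emb hnp l)) * norm (U2 l k) * β l := by
      intro k l
      rw [norm_mul, norm_mul, Complex.norm_real, Real.norm_eq_abs, abs_of_nonneg (hβ0 l)]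
      ring
    have step1 : norm (∑ k ∈ Fn, ∑ l : Fin n,
        U1 (emb hnp k) (emb hnp l) * Complex.ofReal (β l) * U2 l k)
        ≤ ∑ k ∈ Fn, ∑ l : Fin n,
          norm (U1 (emb hnp k) (emb hnp l)) * norm (U2 l k) * β l := by
      calc norm (∑ k ∈ Fn, ∑ l : Fin n,
            U1 (emb hnp k) (emb hnp l) * Complex.ofReal (β l) * U2 l k)
          ≤ ∑ k ∈ Fn, norm (∑ l : Fin n,
            U1 (emb hnp k) (emb hnp l) * Complex.ofReal (β l) * U2 l k) :=
            norm_sum_le _ _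
        _ ≤ ∑ k ∈ Fn, ∑ l : Fin n,
            norm (U1 (emb hnp k) (emb hnp l) * Complex.ofReal (β l) * U2 l k) :=
            Finset.sum_le_sum fun k _ => norm_sum_le _ _
        _ = _ := by
            apply Finset.sum_congr rfl
            intro k _
            exact Finset.sum_congr rfl fun l _ => habs k l
    have step2 : ∑ k ∈ Fn, ∑ l : Fin n,
        norm (U1 (emb hnp k) (emb hnp l)) * norm (U2 l k) * β l
        = ∑ l : Fin n, c l * β l := by
      rw [Finset.sum_comm]
      apply Finset.sum_congr rfl
      intro l _
      rw [hc]
      dsimp only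
      rw [Finset.sum_mul]
    -- bounds on c
    have hc0 : ∀ l, 0 ≤ c l := fun l =>
      Finset.sum_nonneg fun k _ =>
        mul_nonneg (norm_nonneg _) (norm_nonneg _)
    have hc1 : ∀ l, c l ≤ 1 := by
      intro l
      apply cs_le_one Fn _ _ (fun k _ => norm_nonneg _) (fun k _ => norm_nonneg _)
      · calc ∑ k ∈ Fn, norm (U1 (emb hnp k) (emb hnp l)) ^ 2
            = ∑ k ∈ Fn, Complex.normSq (U1 (emb hnp k) (emb hnp l)) := by
              apply Finset.sum_congr rfl; intro k _; rw [Complex.sq_norm]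
          _ ≤ ∑ k : Fin n, Complex.normSq (U1 (emb hnp k) (emb hnp l)) :=
              Finset.sum_le_sum_of_subset_of_nonneg (Finset.subset_univ _)
                (fun k _ _ => Complex.normSq_nonneg _)
          _ ≤ ∑ a : Fin p, Complex.normSq (U1 a (emb hnp l)) :=
              sum_emb_le hnp (fun a => Complex.normSq (U1 a (emb hnp l)))
                (fun a => Complex.normSq_nonneg _) Finset.univ
          _ = 1 := unitary_col hU1 (emb hnp l)
      · calc ∑ k ∈ Fn, norm (U2 l k) ^ 2
            = ∑ k ∈ Fn, Complex.normSq (U2 l k) := by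
              apply Finset.sum_congr rfl; intro k _; rw [Complex.sq_norm]
          _ ≤ ∑ k : Fin n, Complex.normSq (U2 l k) :=
              Finset.sum_le_sum_of_subset_of_nonneg (Finset.subset_univ _)
                (fun k _ _ => Complex.normSq_nonneg _)
          _ = 1 := unitary_row hU2 l
    have hcsum : ∑ l : Fin n, c l ≤ (n : ℝ) - s := by
      have h1 : ∑ l : Fin n, c l = ∑ k ∈ Fn, ∑ l : Fin n,
          norm (U1 (emb hnp k) (emb hnp l)) * norm (U2 l k) :=
        Finset.sum_comm
      rw [h1]
      have h2 : ∀ k : Fin n, ∑ l : Fin n,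
          norm (U1 (emb hnp k) (emb hnp l)) * norm (U2 l k) ≤ 1 := by
        intro k
        apply cs_le_one Finset.univ _ _ (fun l _ => norm_nonneg _)
          (fun l _ => norm_nonneg _)
        · calc ∑ l : Fin n, norm (U1 (emb hnp k) (emb hnp l)) ^ 2
              = ∑ l : Fin n, Complex.normSq (U1 (emb hnp k) (emb hnp l)) := by
                apply Finset.sum_congr rfl; intro l _; rw [Complex.sq_norm]
            _ ≤ ∑ a : Fin p, Complex.normSq (U1 (emb hnp k) a) :=
                sum_emb_le hnp (fun a => Complex.normSq (U1 (emb hnp k) a))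
                  (fun a => Complex.normSq_nonneg _) Finset.univ
            _ = 1 := unitary_row hU1 (emb hnp k)
        · calc ∑ l : Fin n, norm (U2 l k) ^ 2
              = ∑ l : Fin n, Complex.normSq (U2 l k) := by
                apply Finset.sum_congr rfl; intro l _; rw [Complex.sq_norm]
            _ = 1 := unitary_col hU2 k
            _ ≤ 1 := le_rfl
      calc ∑ k ∈ Fn, ∑ l : Fin n,
            norm (U1 (emb hnp k) (emb hnp l)) * norm (U2 l k)
          ≤ ∑ k ∈ Fn, (1 : ℝ) := Finset.sum_le_sum fun k _ => h2 k
        _ = (Fn.card : ℝ) := by rw [Finset.sum_const, nsmul_eq_mul, mul_one]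
        _ = (n : ℝ) - s := by rw [hFn, card_filter_ge, Nat.cast_sub hs]
    have hkey := key_sum s hs β c hβ0 hmono hc0 hc1 hcsum
    calc norm (∑ k ∈ Fn, ∑ l : Fin n,
          U1 (emb hnp k) (emb hnp l) * Complex.ofReal (β l) * U2 l k)
        ≤ ∑ l : Fin n, c l * β l := by rw [← step2]; exact step1
      _ ≤ T := hkey
  -- conclude
  set g : Matrix.unitaryGroup (Fin p) ℂ → Matrix.unitaryGroup (Fin n) ℂ → ℝ := fun X1 X2 =>
    norm (Matrix.trace ((X1 : Matrix (Fin p) (Fin p) ℂ) * B * S⁻¹ *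
      (X2 : Matrix (Fin n) (Fin n) ℂ) * H)) with hg
  have hgb : ∀ X1 X2, g X1 X2 ≤ T := by
    intro X1 X2
    rw [hg]
    dsimp only
    rw [hmat (X1 : Matrix (Fin p) (Fin p) ℂ) (X2 : Matrix (Fin n) (Fin n) ℂ)]
    exact hbound _ _ (mul_mem X1.2 hV) (mul_mem hWmem X2.2)
  set X10 : Matrix.unitaryGroup (Fin p) ℂ := ⟨star V, Unitary.star_mem hV⟩ with hX10
  set X20 : Matrix.unitaryGroup (Fin n) ℂ := ⟨star W, Unitary.star_mem hWmem⟩ with hX20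
  have hval : g X10 X20 = T := by
    rw [hg]
    dsimp only
    rw [hmat (star V) (star W)]
    rw [show star V * V = (1 : Matrix (Fin p) (Fin p) ℂ) from hV.1]
    rw [show W * star W = (1 : Matrix (Fin n) (Fin n) ℂ) from hWmem.2]
    rw [Matrix.one_mul, Matrix.mul_one]
    rw [hH, trace_mul_H hnp s (Sg hnp β)]
    have : ∀ k ∈ Fn, Sg hnp β (emb hnp k) k = Complex.ofReal (β k) := fun k _ =>
      Sg_apply_emb hnp β k
    rw [Finset.sum_congr rfl this, ← Complex.ofReal_sum, Complex.norm_real, Real.norm_eq_abs]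
    exact abs_of_nonneg (Finset.sum_nonneg fun l _ => hβ0 l)
  apply le_antisymm
  · exact ciSup_le fun X1 => ciSup_le fun X2 => hgb X1 X2
  · have hbdd2 : BddAbove (Set.range fun X2 => g X10 X2) := by
      refine ⟨T, ?_⟩; rintro x ⟨X2, rfl⟩; exact hgb X10 X2
    have hbdd1 : BddAbove (Set.range fun X1 => ⨆ X2, g X1 X2) := by
      refine ⟨T, ?_⟩; rintro x ⟨X1, rfl⟩; exact ciSup_le fun X2 => hgb X1 X2
    calc T = g X10 X20 := hval.symm
      _ ≤ ⨆ X2, g X10 X2 := le_ciSup hbdd2 X20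
      _ ≤ ⨆ X1, ⨆ X2, g X1 X2 := le_ciSup hbdd1 X10


theorem stmt18
    {m p n : ℕ} (hnp : n ≤ p)
    (A : Matrix (Fin m) (Fin n) ℂ) (B : Matrix (Fin p) (Fin n) ℂ)
    (hrank : (Matrix.fromRows A B).rank = n)
    (V : Matrix (Fin p) (Fin p) ℂ) (hV : V ∈ Matrix.unitaryGroup (Fin p) ℂ)
    (R : Matrix (Fin n) (Fin n) ℂ) (hR : IsUnit R.det)
    (β : Fin n → ℝ)
    (hβ0 : ∀ k, 0 ≤ β k) (hβ1 : ∀ k, β k ≤ 1) (hmono : Monotone β)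
    (hB : B = V * (Matrix.of fun (k : Fin p) (l : Fin n) =>
        if (k : ℕ) + n = p + (l : ℕ) then Complex.ofReal (β l) else 0) * R)
    (hAA : Aᴴ * A = Rᴴ * Matrix.diagonal (fun l => Complex.ofReal (1 - β l ^ 2)) * R)
    (S : Matrix (Fin n) (Fin n) ℂ) (hS : S.PosDef)
    (hSsq : S * S = Aᴴ * A + Bᴴ * B)
    (i : Fin n) (hi : n / 2 ≤ (i : ℕ)) :
    (β i ^ 2 =
(⨆ Φ : Matrix.unitaryGroup (Fin p) ℂ,
      (Matrix.trace (Bᴴ * (Φ : Matrix (Fin p) (Fin p) ℂ)ᴴ *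
        Matrix.diagonal (fun k : Fin p => if p + (i : ℕ) ≤ (k : ℕ) + n then (1 : ℂ) else 0) *
        (Φ : Matrix (Fin p) (Fin p) ℂ) * B * (Aᴴ * A + Bᴴ * B)⁻¹)).re) -
(⨆ Φ : Matrix.unitaryGroup (Fin p) ℂ,
      (Matrix.trace (Bᴴ * (Φ : Matrix (Fin p) (Fin p) ℂ)ᴴ *
        Matrix.diagonal (fun k : Fin p => if p + (i : ℕ) + 1 ≤ (k : ℕ) + n then (1 : ℂ) else 0) *
        (Φ : Matrix (Fin p) (Fin p) ℂ) * B * (Aᴴ * A + Bᴴ * B)⁻¹)).re)) ∧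
    (β i =
(⨆ X1 : Matrix.unitaryGroup (Fin p) ℂ, ⨆ X2 : Matrix.unitaryGroup (Fin n) ℂ,
      norm (Matrix.trace ((X1 : Matrix (Fin p) (Fin p) ℂ) * B * S⁻¹ *
        (X2 : Matrix (Fin n) (Fin n) ℂ) *
        Matrix.of (fun (k : Fin n) (l : Fin p) =>
          if (l : ℕ) + n = p + (k : ℕ) ∧ (i : ℕ) ≤ (k : ℕ) then (1 : ℂ) else 0)))) -
(⨆ X1 : Matrix.unitaryGroup (Fin p) ℂ, ⨆ X2 : Matrix.unitaryGroup (Fin n) ℂ,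
      norm (Matrix.trace ((X1 : Matrix (Fin p) (Fin p) ℂ) * B * S⁻¹ *
        (X2 : Matrix (Fin n) (Fin n) ℂ) *
        Matrix.of (fun (k : Fin n) (l : Fin p) =>
          if (l : ℕ) + n = p + (k : ℕ) ∧ (i : ℕ) + 1 ≤ (k : ℕ) then (1 : ℂ) else 0))))) := by
  have hB' : B = V * Sg hnp β * R := hB
  have hsplit : ∀ f : Fin n → ℝ,
      ∑ l ∈ Finset.univ.filter (fun l : Fin n => (i : ℕ) ≤ (l : ℕ)), f l
      = f i + ∑ l ∈ Finset.univ.filter (fun l : Fin n => (i : ℕ) + 1 ≤ (l : ℕ)), f l := by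
    intro f
    have hins : (Finset.univ.filter fun l : Fin n => (i : ℕ) ≤ (l : ℕ))
        = insert i (Finset.univ.filter fun l : Fin n => (i : ℕ) + 1 ≤ (l : ℕ)) := by
      ext l
      simp only [Finset.mem_filter, Finset.mem_univ, true_and, Finset.mem_insert, Fin.ext_iff]
      omega
    rw [hins, Finset.sum_insert (by simp)]
  have hs1 : (i : ℕ) ≤ n := le_of_lt i.2
  have hs2 : (i : ℕ) + 1 ≤ n := i.2
  have h1 := partI hnp A B V hV R hR β hβ0 hmono hB' hAA (i : ℕ) hs1
  have h2 := partI hnp A B V hV R hR β hβ0 hmono hB' hAA ((i : ℕ) + 1) hs2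
  have g1 := partII hnp A B V hV R hR β hβ0 hmono hB' hAA S hS hSsq (i : ℕ) hs1
  have g2 := partII hnp A B V hV R hR β hβ0 hmono hB' hAA S hS hSsq ((i : ℕ) + 1) hs2
  have h2' : (⨆ Φ : Matrix.unitaryGroup (Fin p) ℂ,
      (Matrix.trace (Bᴴ * (Φ : Matrix (Fin p) (Fin p) ℂ)ᴴ *
        Matrix.diagonal (fun k : Fin p => if p + (i : ℕ) + 1 ≤ (k : ℕ) + n then (1 : ℂ) else 0) *
        (Φ : Matrix (Fin p) (Fin p) ℂ) * B * (Aᴴ * A + Bᴴ * B)⁻¹)).re)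
      = ∑ l ∈ Finset.univ.filter (fun l : Fin n => (i : ℕ) + 1 ≤ (l : ℕ)), (β l) ^ 2 := h2
  constructor
  · rw [h1, h2', hsplit (fun l => β l ^ 2)]
    ring
  · rw [g1, g2, hsplit β]
    ring
end
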